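/- arXiv:2209.08804 — 2 statements merged into one kernel-verified Lean document; each statement's English description precedes it below -/
import Mathlib

section
/- For every even integer n ≥ 4, the Möbius ladder M_n has Frank number 2. -/
namespace Frank

variable {V : Type*}

/-- An orientation of a simple graph `G`: each edge gets exactly one direction. -/
structure Orient (G : SimpleGraph V) where
  dir : V → V → Prop
  dir_iff : ∀ u v, (dir u v ∨ dir v u) ↔ G.Adj u v
  not_both : ∀ u v, dir u v → ¬ dir v u

/-- A relation (digraph) is strongly connected. -/
def IsStrong (r : V → V → Prop) : Prop :=
  ∀ x y : V, Relation.ReflTransGen r x y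

/-- Delete the single arc `(u,v)` from the digraph `r`. -/
def delArc (r : V → V → Prop) (u v : V) : V → V → Prop :=
  fun a b => r a b ∧ ¬(a = u ∧ b = v)

/-- Delete (both possible arcs of) the edge `uv` from the digraph `r`. -/
def delEdge (r : V → V → Prop) (u v : V) : V → V → Prop :=
  fun a b => r a b ∧ ¬((a = u ∧ b = v) ∨ (a = v ∧ b = u))

/-- The edge `uv` is deletable in the orientation `O`: after removing its arc the
orientation stays strongly connected. -/
def EdgeDeletable {G : SimpleGraph V} (O : Orient G) (u v : V) : Prop :=
  IsStrong (delEdge O.dir u v)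

/-- The Frank number of `G`: the least `k` admitting `k` strongly connected orientations
such that every edge is deletable in at least one of them. -/
noncomputable def frankNumber (G : SimpleGraph V) : ℕ :=
  sInf {k | ∃ Os : Fin k → Orient G, (∀ i, IsStrong (Os i).dir) ∧
    ∀ u v, G.Adj u v → ∃ i, EdgeDeletable (Os i) u v}

/-- `G` is 2-edge-connected: connected and stays connected after deleting any single edge. -/
def TwoEdgeConn (G : SimpleGraph V) : Prop :=
  G.Connected ∧ ∀ e : Sym2 V, (G.deleteEdges {e}).Connected

/-- `G` is 3-edge-connected: connected and stays connected after deleting any two edges. -/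
def ThreeEdgeConn (G : SimpleGraph V) : Prop :=
  G.Connected ∧ ∀ e f : Sym2 V, (G.deleteEdges {e, f}).Connected

/-- The Möbius ladder `M n` on `ZMod n` (`n` even): cycle edges plus diagonals. -/
def mobiusLadder (n : ℕ) : SimpleGraph (ZMod n) :=
  SimpleGraph.fromRel (fun a b => b = a + 1 ∨ b = a + ((n / 2 : ℕ) : ZMod n))

section Aux

variable {n : ℕ}

private lemma castinj' (h0 : 0 < n) {a b : ℕ} (ha : a < n) (hb : b < n)
    (h : (a : ZMod n) = (b : ZMod n)) : a = b := by
  haveI : NeZero n := ⟨by omega⟩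
  have h2 := congrArg ZMod.val h
  rwa [ZMod.val_cast_of_lt ha, ZMod.val_cast_of_lt hb] at h2

private lemma cast_red (h0 : 0 < n) {a : ℕ} (h : n ≤ a) :
    ((a : ℕ) : ZMod n) = ((a - n : ℕ) : ZMod n) := by
  have e : a = (a - n) + n := by omega
  conv_lhs => rw [e]
  rw [Nat.cast_add, ZMod.natCast_self, add_zero]

private lemma half2 (hn : 4 ≤ n) (hev : Even n) : n / 2 + n / 2 = n ∧ 2 ≤ n / 2 := by
  obtain ⟨m, hm⟩ := hev; omega

private lemma zfacts (hn : 4 ≤ n) (hev : Even n) :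
    ((n/2 : ℕ) : ZMod n) + ((n/2 : ℕ) : ZMod n) = 0 ∧
    (1 : ZMod n) ≠ 0 ∧ (2 : ZMod n) ≠ 0 ∧ ((n/2 : ℕ) : ZMod n) ≠ 0 ∧
    ((n/2 : ℕ) : ZMod n) ≠ 1 ∧ ((n/2 : ℕ) : ZMod n) + 1 ≠ 0 := by
  have hh := half2 hn hev
  have h0 : 0 < n := by omega
  refine ⟨?_, ?_, ?_, ?_, ?_, ?_⟩
  · rw [← Nat.cast_add, (show n/2 + n/2 = n from hh.1), ZMod.natCast_self]
  · intro h
    have : (1 : ℕ) = 0 := castinj' h0 (by omega) h0 (by exact_mod_cast h)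
    omega
  · intro h
    have : (2 : ℕ) = 0 := castinj' h0 (by omega) h0 (by exact_mod_cast h)
    omega
  · intro h
    have : (n/2 : ℕ) = 0 := castinj' h0 (by omega) h0 (by exact_mod_cast h)
    omega
  · intro h
    have : (n/2 : ℕ) = 1 := castinj' h0 (by omega) (by omega) (by exact_mod_cast h)
    omega
  · intro h
    have h' : ((n/2 + 1 : ℕ) : ZMod n) = ((0 : ℕ) : ZMod n) := by push_cast; exact h
    have : (n/2 + 1 : ℕ) = 0 := castinj' h0 (by omega) h0 h'
    omega

private lemma walk_fwd [NeZero n] {r : ZMod n → ZMod n → Prop} {A : ZMod n → Prop}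
    (h : ∀ z, A z → r z (z + 1)) :
    ∀ d : ℕ, ∀ x : ZMod n, (∀ t : ℕ, t < d → A (x + t)) → Relation.ReflTransGen r x (x + d)
  | 0, x, _ => by simpa using Relation.ReflTransGen.refl
  | (d+1), x, hA => by
      have h1 := walk_fwd h d x (fun t ht => hA t (by omega))
      have h2 : r (x + (d : ℕ)) (x + (d : ℕ) + 1) := h _ (hA d (by omega))
      have e : x + ((d : ℕ) : ZMod n) + 1 = x + (((d+1 : ℕ) : ℕ) : ZMod n) := by push_cast; ring
      exact e ▸ h1.tail h2

private lemma walk_to [NeZero n] {r : ZMod n → ZMod n → Prop} {i : ZMod n}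
    (h : ∀ z, z ≠ i → r z (z + 1)) (x : ZMod n) : Relation.ReflTransGen r x i := by
  have key := walk_fwd (A := fun z => z ≠ i) h ((i - x).val) x ?_
  · have e : x + (((i - x).val : ℕ) : ZMod n) = i := by
      rw [ZMod.natCast_rightInverse (i - x)]; ring
    rwa [e] at key
  · intro t ht heq
    have h1 : (t : ZMod n) = i - x := by rw [← heq]; ring
    have h2 : t = (i - x).val := by
      have := congrArg ZMod.val h1
      rwa [ZMod.val_cast_of_lt (lt_trans ht (ZMod.val_lt _))] at this
    omega

private lemma walk_from [NeZero n] (hn1 : 1 < n) {r : ZMod n → ZMod n → Prop} {i : ZMod n}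
    (h : ∀ z, z ≠ i → r z (z + 1)) (y : ZMod n) : Relation.ReflTransGen r (i + 1) y := by
  have key := walk_fwd (A := fun z => z ≠ i) h ((y - (i + 1)).val) (i + 1) ?_
  · have e : (i + 1) + (((y - (i + 1)).val : ℕ) : ZMod n) = y := by
      rw [ZMod.natCast_rightInverse (y - (i + 1))]; ring
    rwa [e] at key
  · intro t ht heq
    have h1 : (t : ZMod n) = ((n - 1 : ℕ) : ZMod n) := by
      have e : ((n - 1 : ℕ) : ZMod n) + 1 = 0 := by
        rw [show ((n-1:ℕ) : ZMod n) + 1 = ((n - 1 + 1 : ℕ) : ZMod n) by push_cast; ring,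
          show n - 1 + 1 = n by omega, ZMod.natCast_self]
      linear_combination heq - e
    have h2 : t = n - 1 := castinj' (by omega) (lt_trans ht (ZMod.val_lt _)) (by omega) h1
    have h3 : (y - (i + 1)).val < n := ZMod.val_lt _
    omega

private lemma cyc_strong [NeZero n] {r : ZMod n → ZMod n → Prop}
    (h : ∀ z, r z (z + 1)) : IsStrong r := fun x y =>
  walk_to (i := y) (fun z _ => h z) x

private lemma natWalk [NeZero n] {r : ZMod n → ZMod n → Prop} (a b : ℕ) (hab : a ≤ b)
    (h : ∀ t, a ≤ t → t < b → r ↑t ↑(t+1)) : Relation.ReflTransGen r ↑a ↑b := by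
  induction b, hab using Nat.le_induction with
  | base => exact .refl
  | succ m hm ih =>
    exact (ih (fun t ht1 ht2 => h t ht1 (by omega))).tail (h m hm (by omega))

private def mkOrient (hn : 4 ≤ n) (hev : Even n) (Q R : ZMod n → Prop)
    (hR : ∀ x, R (x + ((n/2 : ℕ) : ZMod n)) ↔ ¬ R x) : Orient (mobiusLadder n) where
  dir u v := (v = u + 1 ∧ Q u) ∨ (u = v + 1 ∧ ¬ Q v) ∨ (v = u + ((n/2 : ℕ) : ZMod n) ∧ R u)
  dir_iff u v := by
    obtain ⟨hkk, h1, h2, hk0, hk1, hk4⟩ := zfacts hn hev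
    rw [mobiusLadder, SimpleGraph.fromRel_adj]
    constructor
    · rintro ((⟨ha, -⟩ | ⟨ha, -⟩ | ⟨ha, -⟩) | (⟨ha, -⟩ | ⟨ha, -⟩ | ⟨ha, -⟩))
      · exact ⟨fun h => h1 (by linear_combination - h - ha), Or.inl (Or.inl ha)⟩
      · exact ⟨fun h => h1 (by linear_combination h - ha), Or.inr (Or.inl ha)⟩
      · exact ⟨fun h => hk0 (by linear_combination - h - ha), Or.inl (Or.inr ha)⟩
      · exact ⟨fun h => h1 (by linear_combination h - ha), Or.inr (Or.inl ha)⟩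
      · exact ⟨fun h => h1 (by linear_combination - h - ha), Or.inl (Or.inl ha)⟩
      · exact ⟨fun h => hk0 (by linear_combination h - ha), Or.inr (Or.inr ha)⟩
    · rintro ⟨hne, (h | h) | (h | h)⟩
      · by_cases hq : Q u
        · exact Or.inl (Or.inl ⟨h, hq⟩)
        · exact Or.inr (Or.inr (Or.inl ⟨h, hq⟩))
      · by_cases hr : R u
        · exact Or.inl (Or.inr (Or.inr ⟨h, hr⟩))
        · refine Or.inr (Or.inr (Or.inr ⟨by rw [h, add_assoc, hkk, add_zero], ?_⟩))
          rw [h]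
          exact (hR u).2 hr
      · by_cases hq : Q v
        · exact Or.inr (Or.inl ⟨h, hq⟩)
        · exact Or.inl (Or.inr (Or.inl ⟨h, hq⟩))
      · by_cases hr : R v
        · exact Or.inr (Or.inr (Or.inr ⟨h, hr⟩))
        · refine Or.inl (Or.inr (Or.inr ⟨by rw [h, add_assoc, hkk, add_zero], ?_⟩))
          rw [h]
          exact (hR v).2 hr
  not_both u v := by
    obtain ⟨hkk, h1, h2, hk0, hk1, hk4⟩ := zfacts hn hev
    rintro (⟨ha, hqa⟩ | ⟨ha, hqa⟩ | ⟨ha, hra⟩) (⟨hb, hqb⟩ | ⟨hb, hqb⟩ | ⟨hb, hrb⟩)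
    · exact h2 (by linear_combination - ha - hb)
    · exact hqb hqa
    · exact hk4 (by linear_combination - ha - hb)
    · exact hqa hqb
    · exact h2 (by linear_combination - ha - hb)
    · exact hk1 (by linear_combination ha - hb)
    · exact hk4 (by linear_combination - ha - hb)
    · exact hk1 (by linear_combination hb - ha)
    · exact ((hR u).1 (ha ▸ hrb)) hra

private def OA (hn : 4 ≤ n) (hev : Even n) (P : ZMod n → Prop)
    (hP : ∀ x, P (x + ((n/2 : ℕ) : ZMod n)) ↔ ¬ P x) : Orient (mobiusLadder n) :=
  mkOrient hn hev (fun _ => True) P hP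

variable {P : ZMod n → Prop}

private lemma OA_dir_cyc {hn : 4 ≤ n} {hev : Even n}
    {hP : ∀ x, P (x + ((n/2 : ℕ) : ZMod n)) ↔ ¬ P x} (z : ZMod n) :
    (OA hn hev P hP).dir z (z + 1) := Or.inl ⟨rfl, trivial⟩

private lemma OA_dir_rung {hn : 4 ≤ n} {hev : Even n}
    {hP : ∀ x, P (x + ((n/2 : ℕ) : ZMod n)) ↔ ¬ P x} (z : ZMod n) (h : P z) :
    (OA hn hev P hP).dir z (z + ((n/2 : ℕ) : ZMod n)) := Or.inr (Or.inr ⟨rfl, h⟩)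

private lemma A_strong (hn : 4 ≤ n) (hev : Even n)
    (hP : ∀ x, P (x + ((n/2 : ℕ) : ZMod n)) ↔ ¬ P x) :
    IsStrong (OA hn hev P hP).dir := by
  haveI : NeZero n := ⟨by omega⟩
  exact cyc_strong (fun z => OA_dir_cyc z)

private lemma A_del_rung (hn : 4 ≤ n) (hev : Even n)
    (hP : ∀ x, P (x + ((n/2 : ℕ) : ZMod n)) ↔ ¬ P x) (u : ZMod n) :
    IsStrong (delEdge (OA hn hev P hP).dir u (u + ((n/2 : ℕ) : ZMod n))) := by
  haveI : NeZero n := ⟨by omega⟩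
  obtain ⟨hkk, h1, h2, hk0, hk1, hk4⟩ := zfacts hn hev
  refine cyc_strong (fun z => ⟨OA_dir_cyc z, ?_⟩)
  rintro (⟨e1, e2⟩ | ⟨e1, e2⟩)
  · exact hk1 (by linear_combination e1 - e2)
  · exact hk4 (by linear_combination e2 - e1)

private lemma A_del_cyc (hn : 4 ≤ n) (hev : Even n)
    (hP : ∀ x, P (x + ((n/2 : ℕ) : ZMod n)) ↔ ¬ P x) (i : ZMod n)
    (hPi : P i) (hPk : P (i + ((n/2 : ℕ) : ZMod n) + 1)) :
    IsStrong (delEdge (OA hn hev P hP).dir i (i + 1)) := by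
  haveI : NeZero n := ⟨by omega⟩
  obtain ⟨hkk, h1, h2, hk0, hk1, hk4⟩ := zfacts hn hev
  set r := delEdge (OA hn hev P hP).dir i (i + 1) with hrdef
  have hstep : ∀ z, z ≠ i → r z (z + 1) := by
    intro z hz
    refine ⟨OA_dir_cyc z, ?_⟩
    rintro (⟨e1, e2⟩ | ⟨e1, e2⟩)
    · exact hz e1
    · exact h2 (by linear_combination e2 - e1)
  have s1 : r i (i + ((n/2 : ℕ) : ZMod n)) := by
    refine ⟨OA_dir_rung i hPi, ?_⟩
    rintro (⟨e1, e2⟩ | ⟨e1, e2⟩)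
    · exact hk1 (by linear_combination e2)
    · exact h1 (by linear_combination - e1)
  have s2 : r (i + ((n/2 : ℕ) : ZMod n)) (i + ((n/2 : ℕ) : ZMod n) + 1) := by
    refine ⟨OA_dir_cyc _, ?_⟩
    rintro (⟨e1, e2⟩ | ⟨e1, e2⟩)
    · exact hk0 (by linear_combination e1)
    · exact hk1 (by linear_combination e1)
  have s3 : r (i + ((n/2 : ℕ) : ZMod n) + 1) (i + 1) := by
    have hd : (OA hn hev P hP).dir (i + ((n/2 : ℕ) : ZMod n) + 1) (i + 1) := by
      have e : i + 1 = (i + ((n/2 : ℕ) : ZMod n) + 1) + ((n/2 : ℕ) : ZMod n) := by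
        linear_combination - hkk
      exact e ▸ OA_dir_rung _ hPk
    refine ⟨hd, ?_⟩
    rintro (⟨e1, e2⟩ | ⟨e1, e2⟩)
    · exact hk4 (by linear_combination e1)
    · exact hk0 (by linear_combination e1)
  have det : Relation.ReflTransGen r i (i + 1) :=
    ((Relation.ReflTransGen.single s1).tail s2).tail s3
  intro x y
  exact ((walk_to hstep x).trans det).trans (walk_from (by omega) hstep y)

private def QB (n : ℕ) : ZMod n → Prop := fun z => z.val < n/2 ∨ ¬ Even z.val

private def RB (n : ℕ) : ZMod n → Prop := fun z => Even z.val ↔ n/2 ≤ z.val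

private lemma val_add_half (hn : 4 ≤ n) (hev : Even n) (x : ZMod n) :
    (x + ((n/2 : ℕ) : ZMod n)).val = if x.val < n/2 then x.val + n/2 else x.val - n/2 := by
  haveI : NeZero n := ⟨by omega⟩
  have hh := half2 hn hev
  have hk : ((n/2 : ℕ) : ZMod n).val = n/2 := ZMod.val_cast_of_lt (by omega)
  have hx := ZMod.val_lt x
  rw [ZMod.val_add, hk]
  split
  · rw [Nat.mod_eq_of_lt (by omega)]
  · have h2 : x.val + n/2 = (x.val - n/2) + n := by omega
    rw [h2, Nat.add_mod_right, Nat.mod_eq_of_lt (by omega)]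

private lemma hRB (hn : 4 ≤ n) (hev : Even n) (hk : Even (n/2)) :
    ∀ x : ZMod n, RB n (x + ((n/2 : ℕ) : ZMod n)) ↔ ¬ RB n x := by
  intro x
  haveI : NeZero n := ⟨by omega⟩
  have hh := half2 hn hev
  have hv := val_add_half hn hev x
  have hx := ZMod.val_lt x
  unfold RB
  rw [hv]
  rcases Nat.lt_or_ge x.val (n/2) with h | h
  · rw [if_pos h]
    have e1 : Even (x.val + n/2) ↔ Even x.val := by
      rw [Nat.even_add]; simp [hk]
    have e2 : n/2 ≤ x.val + n/2 := by omega
    have e3 : ¬ (n/2 ≤ x.val) := by omega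
    rw [e1]
    tauto
  · rw [if_neg (by omega)]
    have e1 : Even (x.val - n/2) ↔ Even x.val := by
      rw [Nat.even_sub h]; simp [hk]
    have e2 : ¬ (n/2 ≤ x.val - n/2) := by omega
    have e3 : n/2 ≤ x.val := h
    rw [e1]
    tauto

private def OB (hn : 4 ≤ n) (hev : Even n) (hk : Even (n/2)) : Orient (mobiusLadder n) :=
  mkOrient hn hev (QB n) (RB n) (hRB hn hev hk)

private lemma OB_F {hn : 4 ≤ n} {hev : Even n} {hk : Even (n/2)} (t : ℕ)
    (h1 : t + 1 < n) (h2 : t < n/2 ∨ ¬ Even t) :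
    (OB hn hev hk).dir ((t : ℕ) : ZMod n) ((t+1 : ℕ) : ZMod n) := by
  haveI : NeZero n := ⟨by omega⟩
  refine Or.inl ⟨by push_cast; ring, ?_⟩
  show ((t : ℕ) : ZMod n).val < n/2 ∨ ¬ Even ((t : ℕ) : ZMod n).val
  rw [ZMod.val_cast_of_lt (by omega)]
  exact h2

private lemma OB_Flast {hn : 4 ≤ n} {hev : Even n} {hk : Even (n/2)} :
    (OB hn hev hk).dir ((n - 1 : ℕ) : ZMod n) ((0 : ℕ) : ZMod n) := by
  haveI : NeZero n := ⟨by omega⟩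
  refine Or.inl ⟨?_, ?_⟩
  · rw [show ((n-1:ℕ) : ZMod n) + 1 = ((n - 1 + 1 : ℕ) : ZMod n) by push_cast; ring,
      show n - 1 + 1 = n by omega, ZMod.natCast_self, Nat.cast_zero]
  · show ((n - 1 : ℕ) : ZMod n).val < n/2 ∨ ¬ Even ((n - 1 : ℕ) : ZMod n).val
    rw [ZMod.val_cast_of_lt (by omega)]
    right
    rw [Nat.even_iff]
    obtain ⟨m, hm⟩ := hev
    omega

private lemma OB_Bk {hn : 4 ≤ n} {hev : Even n} {hk : Even (n/2)} (t : ℕ)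
    (h1 : t + 1 < n) (h2 : n/2 ≤ t) (h3 : Even t) :
    (OB hn hev hk).dir ((t+1 : ℕ) : ZMod n) ((t : ℕ) : ZMod n) := by
  haveI : NeZero n := ⟨by omega⟩
  refine Or.inr (Or.inl ⟨by push_cast; ring, ?_⟩)
  show ¬ (((t : ℕ) : ZMod n).val < n/2 ∨ ¬ Even ((t : ℕ) : ZMod n).val)
  rw [ZMod.val_cast_of_lt (by omega)]
  push_neg
  exact ⟨by omega, h3⟩

private lemma OB_Rup {hn : 4 ≤ n} {hev : Even n} {hk : Even (n/2)} (j : ℕ)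
    (h1 : j < n/2) (h2 : ¬ Even j) :
    (OB hn hev hk).dir ((j : ℕ) : ZMod n) ((j + n/2 : ℕ) : ZMod n) := by
  haveI : NeZero n := ⟨by omega⟩
  have hh := half2 hn hev
  refine Or.inr (Or.inr ⟨by push_cast; ring, ?_⟩)
  show Even ((j : ℕ) : ZMod n).val ↔ n/2 ≤ ((j : ℕ) : ZMod n).val
  rw [ZMod.val_cast_of_lt (by omega)]
  constructor
  · intro h; exact absurd h h2
  · intro h; omega

private lemma OB_Rdn {hn : 4 ≤ n} {hev : Even n} {hk : Even (n/2)} (t : ℕ)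
    (h1 : t < n) (h2 : n/2 ≤ t) (h3 : Even t) :
    (OB hn hev hk).dir ((t : ℕ) : ZMod n) ((t - n/2 : ℕ) : ZMod n) := by
  haveI : NeZero n := ⟨by omega⟩
  have hh := half2 hn hev
  have hkk := (zfacts hn hev).1
  refine Or.inr (Or.inr ⟨?_, ?_⟩)
  · have e : t = (t - n/2) + n/2 := by omega
    conv_rhs => rw [e]
    push_cast
    linear_combination - hkk
  · show Even ((t : ℕ) : ZMod n).val ↔ n/2 ≤ ((t : ℕ) : ZMod n).val
    rw [ZMod.val_cast_of_lt (by omega)]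
    exact ⟨fun _ => h2, fun _ => h3⟩

private lemma B_del1 (hn : 4 ≤ n) (hev : Even n) (hk : Even (n/2)) (i : ℕ)
    (hi : i < n/2) (hoi : ¬ Even i) :
    IsStrong (delEdge (OB hn hev hk).dir ((i : ℕ) : ZMod n) ((i+1 : ℕ) : ZMod n)) := by
  haveI : NeZero n := ⟨by omega⟩
  have hh := half2 hn hev
  have hk2 : n/2 % 2 = 0 := Nat.even_iff.1 hk
  have hi2 : i % 2 = 1 := Nat.odd_iff.1 (Nat.not_even_iff_odd.1 hoi)
  set r := delEdge (OB hn hev hk).dir ((i : ℕ) : ZMod n) ((i+1 : ℕ) : ZMod n) with hrdef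
  have mk : ∀ a b : ℕ, a < n → b < n → (OB hn hev hk).dir ((a : ℕ) : ZMod n) ((b : ℕ) : ZMod n) →
      ¬((a = i ∧ b = i+1) ∨ (a = i+1 ∧ b = i)) → r ((a : ℕ) : ZMod n) ((b : ℕ) : ZMod n) := by
    intro a b ha hb hd hne
    refine ⟨hd, ?_⟩
    rintro (⟨e1, e2⟩ | ⟨e1, e2⟩)
    · exact hne (Or.inl ⟨castinj' (by omega) ha (by omega) e1, castinj' (by omega) hb (by omega) e2⟩)
    · exact hne (Or.inr ⟨castinj' (by omega) ha (by omega) e1, castinj' (by omega) hb (by omega) e2⟩)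
  have rF : ∀ t, t + 1 < n → (t < n/2 ∨ ¬ Even t) → t ≠ i → r ((t:ℕ) : ZMod n) ((t+1:ℕ) : ZMod n) :=
    fun t h1 h2 h3 => mk t (t+1) (by omega) (by omega) (OB_F t h1 h2) (by omega)
  have rBk : ∀ t, t + 1 < n → n/2 ≤ t → Even t → r ((t+1:ℕ) : ZMod n) ((t:ℕ) : ZMod n) :=
    fun t h1 h2 h3 => mk (t+1) t (by omega) (by omega) (OB_Bk t h1 h2 h3) (by omega)
  have rRup : ∀ j, j < n/2 → ¬ Even j → r ((j:ℕ) : ZMod n) ((j + n/2 : ℕ) : ZMod n) := by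
    intro j h1 h2
    have hj2 : j % 2 = 1 := Nat.odd_iff.1 (Nat.not_even_iff_odd.1 h2)
    exact mk j (j + n/2) (by omega) (by omega) (OB_Rup j h1 h2) (by omega)
  have rRdn : ∀ t, t < n → n/2 ≤ t → Even t → r ((t:ℕ) : ZMod n) ((t - n/2 : ℕ) : ZMod n) := by
    intro t h1 h2 h3
    have ht2 : t % 2 = 0 := Nat.even_iff.1 h3
    exact mk t (t - n/2) (by omega) (by omega) (OB_Rdn t h1 h2 h3) (by omega)
  have rK0 : r ((n/2 : ℕ) : ZMod n) ((0 : ℕ) : ZMod n) := by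
    have := rRdn (n/2) (by omega) (le_refl _) hk
    rwa [Nat.sub_self] at this
  have walkF : ∀ a b : ℕ, a ≤ b → b ≤ n/2 → (∀ t, a ≤ t → t < b → t ≠ i) →
      Relation.ReflTransGen r ((a:ℕ) : ZMod n) ((b:ℕ) : ZMod n) := by
    intro a b hab hbk hguard
    exact natWalk a b hab (fun t ht1 ht2 => rF t (by omega) (Or.inl (by omega)) (hguard t ht1 ht2))
  have low2i : ∀ z, z < n/2 → Relation.ReflTransGen r ((z:ℕ) : ZMod n) ((i:ℕ) : ZMod n) := by
    intro z hz
    rcases le_or_gt z i with h | h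
    · exact walkF z i h (by omega) (fun t ht1 ht2 => by omega)
    · have w1 := walkF z (n/2) (by omega) (le_refl _) (fun t ht1 ht2 => by omega)
      have w3 := walkF 0 i (by omega) (by omega) (fun t ht1 ht2 => by omega)
      exact ((w1.tail rK0).trans w3)
  have to_i : ∀ x : ZMod n, Relation.ReflTransGen r x ((i:ℕ) : ZMod n) := by
    intro x
    obtain ⟨a, ha, rfl⟩ : ∃ a : ℕ, a < n ∧ ((a:ℕ) : ZMod n) = x :=
      ⟨x.val, ZMod.val_lt x, ZMod.natCast_rightInverse x⟩
    rcases Nat.lt_or_ge a (n/2) with h | h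
    · exact low2i a h
    · rcases Nat.even_or_odd a with he | ho
      · exact (Relation.ReflTransGen.single (rRdn a ha h he)).trans (low2i (a - n/2) (by omega))
      · have ha2 : a % 2 = 1 := Nat.odd_iff.1 ho
        have e1 : r ((a:ℕ) : ZMod n) ((a-1 : ℕ) : ZMod n) := by
          have := rBk (a-1) (by omega) (by omega) (by rw [Nat.even_iff]; omega)
          rwa [show a - 1 + 1 = a by omega] at this
        have e2 := rRdn (a-1) (by omega) (by omega) (by rw [Nat.even_iff]; omega)
        exact ((Relation.ReflTransGen.single e1).tail e2).trans (low2i (a - 1 - n/2) (by omega))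
  have det : Relation.ReflTransGen r ((i:ℕ) : ZMod n) ((i+1:ℕ) : ZMod n) := by
    rcases Nat.lt_or_ge i (n/2 - 1) with h | h
    · have s1 := rRup i hi hoi
      have s2 : r ((i + n/2 : ℕ) : ZMod n) ((i + n/2 + 1 : ℕ) : ZMod n) :=
        rF (i + n/2) (by omega) (Or.inr (by rw [Nat.even_iff]; omega)) (by omega)
      have s3 : r ((i + n/2 + 1 : ℕ) : ZMod n) ((i + 1 : ℕ) : ZMod n) := by
        have := rRdn (i + n/2 + 1) (by omega) (by omega) (by rw [Nat.even_iff]; omega)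
        rwa [show i + n/2 + 1 - n/2 = i + 1 by omega] at this
      exact ((Relation.ReflTransGen.single s1).tail s2).tail s3
    · have hik : i = n/2 - 1 := by omega
      have s1 := rRup i hi hoi
      have s2 : r ((i + n/2 : ℕ) : ZMod n) ((0:ℕ) : ZMod n) := by
        have : (OB hn hev hk).dir ((n - 1 : ℕ) : ZMod n) ((0 : ℕ) : ZMod n) := OB_Flast
        have h2 := mk (n-1) 0 (by omega) (by omega) this (by omega)
        rwa [show n - 1 = i + n/2 by omega] at h2
      have s3 : r ((0:ℕ) : ZMod n) ((1:ℕ) : ZMod n) := rF 0 (by omega) (Or.inl (by omega)) (by omega)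
      have s4 : r ((1:ℕ) : ZMod n) ((1 + n/2 : ℕ) : ZMod n) := rRup 1 (by omega) (by decide)
      have s5 : r ((n/2 + 1 : ℕ) : ZMod n) ((n/2 : ℕ) : ZMod n) := rBk (n/2) (by omega) (le_refl _) hk
      rw [show 1 + n/2 = n/2 + 1 by omega] at s4
      have chain := ((((Relation.ReflTransGen.single s1).tail s2).tail s3).tail s4).tail s5
      rwa [show n/2 = i + 1 by omega] at chain
  have tolow : ∀ z, z < n/2 → Relation.ReflTransGen r ((i+1:ℕ) : ZMod n) ((z:ℕ) : ZMod n) := by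
    intro z hz
    rcases le_or_gt (i+1) z with h | h
    · exact walkF (i+1) z h (by omega) (fun t ht1 ht2 => by omega)
    · have w1 := walkF (i+1) (n/2) (by omega) (le_refl _) (fun t ht1 ht2 => by omega)
      have w3 := walkF 0 z (by omega) (by omega) (fun t ht1 ht2 => by omega)
      exact (w1.tail rK0).trans w3
  have from_i1 : ∀ y : ZMod n, Relation.ReflTransGen r ((i+1:ℕ) : ZMod n) y := by
    intro y
    obtain ⟨b, hb, rfl⟩ : ∃ b : ℕ, b < n ∧ ((b:ℕ) : ZMod n) = y :=
      ⟨y.val, ZMod.val_lt y, ZMod.natCast_rightInverse y⟩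
    rcases Nat.lt_or_ge b (n/2) with h | h
    · exact tolow b h
    · rcases Nat.even_or_odd b with he | ho
      · have hb2 : b % 2 = 0 := Nat.even_iff.1 he
        have w1 := tolow (b + 1 - n/2) (by omega)
        have w2 := rRup (b + 1 - n/2) (by omega) (by rw [Nat.even_iff]; omega)
        rw [show b + 1 - n/2 + n/2 = b + 1 by omega] at w2
        have w3 := rBk b (by omega) h he
        exact (w1.tail w2).tail w3
      · have hb2 : b % 2 = 1 := Nat.odd_iff.1 ho
        have w1 := tolow (b - n/2) (by omega)
        have w2 := rRup (b - n/2) (by omega) (by rw [Nat.even_iff]; omega)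
        rw [show b - n/2 + n/2 = b by omega] at w2
        exact w1.tail w2
  exact fun x y => ((to_i x).trans det).trans (from_i1 y)

private lemma B_del2 (hn : 4 ≤ n) (hev : Even n) (hk : Even (n/2)) (m : ℕ)
    (hm1 : n/2 ≤ m) (hm2 : Even m) (hm3 : m + 1 < n) :
    IsStrong (delEdge (OB hn hev hk).dir ((m : ℕ) : ZMod n) ((m+1 : ℕ) : ZMod n)) := by
  haveI : NeZero n := ⟨by omega⟩
  have hh := half2 hn hev
  have hk2 : n/2 % 2 = 0 := Nat.even_iff.1 hk
  have hn2 : n % 2 = 0 := Nat.even_iff.1 hev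
  have hmm2 : m % 2 = 0 := Nat.even_iff.1 hm2
  set r := delEdge (OB hn hev hk).dir ((m : ℕ) : ZMod n) ((m+1 : ℕ) : ZMod n) with hrdef
  have mk : ∀ a b : ℕ, a < n → b < n → (OB hn hev hk).dir ((a : ℕ) : ZMod n) ((b : ℕ) : ZMod n) →
      ¬((a = m ∧ b = m+1) ∨ (a = m+1 ∧ b = m)) → r ((a : ℕ) : ZMod n) ((b : ℕ) : ZMod n) := by
    intro a b ha hb hd hne
    refine ⟨hd, ?_⟩
    rintro (⟨e1, e2⟩ | ⟨e1, e2⟩)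
    · exact hne (Or.inl ⟨castinj' (by omega) ha (by omega) e1, castinj' (by omega) hb (by omega) e2⟩)
    · exact hne (Or.inr ⟨castinj' (by omega) ha (by omega) e1, castinj' (by omega) hb (by omega) e2⟩)
  have rF : ∀ t, t + 1 < n → (t < n/2 ∨ ¬ Even t) → t ≠ m → r ((t:ℕ) : ZMod n) ((t+1:ℕ) : ZMod n) :=
    fun t h1 h2 h3 => mk t (t+1) (by omega) (by omega) (OB_F t h1 h2) (by omega)
  have rFlast : r ((n-1 : ℕ) : ZMod n) ((0:ℕ) : ZMod n) :=
    mk (n-1) 0 (by omega) (by omega) OB_Flast (by omega)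
  have rBk : ∀ t, t + 1 < n → n/2 ≤ t → Even t → t ≠ m → r ((t+1:ℕ) : ZMod n) ((t:ℕ) : ZMod n) :=
    fun t h1 h2 h3 h4 => mk (t+1) t (by omega) (by omega) (OB_Bk t h1 h2 h3) (by omega)
  have rRup : ∀ j, j < n/2 → ¬ Even j → r ((j:ℕ) : ZMod n) ((j + n/2 : ℕ) : ZMod n) := by
    intro j h1 h2
    have hj2 : j % 2 = 1 := Nat.odd_iff.1 (Nat.not_even_iff_odd.1 h2)
    exact mk j (j + n/2) (by omega) (by omega) (OB_Rup j h1 h2) (by omega)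
  have rRdn : ∀ t, t < n → n/2 ≤ t → Even t → r ((t:ℕ) : ZMod n) ((t - n/2 : ℕ) : ZMod n) := by
    intro t h1 h2 h3
    have ht2 : t % 2 = 0 := Nat.even_iff.1 h3
    exact mk t (t - n/2) (by omega) (by omega) (OB_Rdn t h1 h2 h3) (by omega)
  have rK0 : r ((n/2 : ℕ) : ZMod n) ((0 : ℕ) : ZMod n) := by
    have := rRdn (n/2) (by omega) (le_refl _) hk
    rwa [Nat.sub_self] at this
  have walkF : ∀ a b : ℕ, a ≤ b → b ≤ n/2 →
      Relation.ReflTransGen r ((a:ℕ) : ZMod n) ((b:ℕ) : ZMod n) := by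
    intro a b hab hbk
    exact natWalk a b hab (fun t ht1 ht2 => rF t (by omega) (Or.inl (by omega)) (by omega))
  have to0 : ∀ x : ZMod n, Relation.ReflTransGen r x ((0:ℕ) : ZMod n) := by
    intro x
    obtain ⟨a, ha, rfl⟩ : ∃ a : ℕ, a < n ∧ ((a:ℕ) : ZMod n) = x :=
      ⟨x.val, ZMod.val_lt x, ZMod.natCast_rightInverse x⟩
    rcases Nat.lt_or_ge a (n/2) with h | h
    · exact (walkF a (n/2) (by omega) (le_refl _)).tail rK0
    · rcases Nat.even_or_odd a with he | ho
      · exact (Relation.ReflTransGen.single (rRdn a ha h he)).trans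
          ((walkF (a - n/2) (n/2) (by omega) (le_refl _)).tail rK0)
      · have ha2 : a % 2 = 1 := Nat.odd_iff.1 ho
        by_cases ham : a = m + 1
        · by_cases hal : a = n - 1
          · rw [hal]
            exact Relation.ReflTransGen.single rFlast
          · have s1 : r ((a:ℕ) : ZMod n) ((a+1:ℕ) : ZMod n) :=
              rF a (by omega) (Or.inr (by rw [Nat.even_iff]; omega)) (by omega)
            have s2 := rRdn (a+1) (by omega) (by omega) (by rw [Nat.even_iff]; omega)
            exact ((Relation.ReflTransGen.single s1).tail s2).trans
              ((walkF (a + 1 - n/2) (n/2) (by omega) (le_refl _)).tail rK0)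
        · have e1 : r ((a:ℕ) : ZMod n) ((a-1 : ℕ) : ZMod n) := by
            have := rBk (a-1) (by omega) (by omega) (by rw [Nat.even_iff]; omega) (by omega)
            rwa [show a - 1 + 1 = a by omega] at this
          have e2 := rRdn (a-1) (by omega) (by omega) (by rw [Nat.even_iff]; omega)
          exact ((Relation.ReflTransGen.single e1).tail e2).trans
            ((walkF (a - 1 - n/2) (n/2) (by omega) (le_refl _)).tail rK0)
  have from0 : ∀ y : ZMod n, Relation.ReflTransGen r ((0:ℕ) : ZMod n) y := by
    intro y
    obtain ⟨b, hb, rfl⟩ : ∃ b : ℕ, b < n ∧ ((b:ℕ) : ZMod n) = y :=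
      ⟨y.val, ZMod.val_lt y, ZMod.natCast_rightInverse y⟩
    rcases Nat.lt_or_ge b (n/2) with h | h
    · exact walkF 0 b (by omega) (by omega)
    · rcases Nat.even_or_odd b with he | ho
      · have hb2 : b % 2 = 0 := Nat.even_iff.1 he
        by_cases hbm : b = m
        · rw [hbm]
          by_cases hmk : m = n/2
          · have w1 := walkF 0 (n/2 - 1) (by omega) (by omega)
            have w2 : r ((n/2 - 1 : ℕ) : ZMod n) ((n/2 - 1 + 1 : ℕ) : ZMod n) :=
              rF (n/2 - 1) (by omega) (Or.inl (by omega)) (by omega)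
            rw [show n/2 - 1 + 1 = m by omega] at w2
            exact w1.tail w2
          · have w1 := walkF 0 (m - 1 - n/2) (by omega) (by omega)
            have w2 := rRup (m - 1 - n/2) (by omega) (by rw [Nat.even_iff]; omega)
            rw [show m - 1 - n/2 + n/2 = m - 1 by omega] at w2
            have w3 : r ((m-1 : ℕ) : ZMod n) ((m-1+1 : ℕ) : ZMod n) :=
              rF (m-1) (by omega) (Or.inr (by rw [Nat.even_iff]; omega)) (by omega)
            rw [show m - 1 + 1 = m by omega] at w3
            exact (w1.tail w2).tail w3
        · have w1 := walkF 0 (b + 1 - n/2) (by omega) (by omega)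
          have w2 := rRup (b + 1 - n/2) (by omega) (by rw [Nat.even_iff]; omega)
          rw [show b + 1 - n/2 + n/2 = b + 1 by omega] at w2
          have w3 := rBk b (by omega) h he (by omega)
          exact (w1.tail w2).tail w3
      · have hb2 : b % 2 = 1 := Nat.odd_iff.1 ho
        have w1 := walkF 0 (b - n/2) (by omega) (by omega)
        have w2 := rRup (b - n/2) (by omega) (by rw [Nat.even_iff]; omega)
        rw [show b - n/2 + n/2 = b by omega] at w2
        exact w1.tail w2
  exact fun x y => (to0 x).trans (from0 y)

private lemma B_del3 (hn : 4 ≤ n) (hev : Even n) (hk : Even (n/2)) :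
    IsStrong (delEdge (OB hn hev hk).dir ((n - 1 : ℕ) : ZMod n) ((0 : ℕ) : ZMod n)) := by
  haveI : NeZero n := ⟨by omega⟩
  have hh := half2 hn hev
  have hk2 : n/2 % 2 = 0 := Nat.even_iff.1 hk
  have hn2 : n % 2 = 0 := Nat.even_iff.1 hev
  set r := delEdge (OB hn hev hk).dir ((n-1 : ℕ) : ZMod n) ((0 : ℕ) : ZMod n) with hrdef
  have mk : ∀ a b : ℕ, a < n → b < n → (OB hn hev hk).dir ((a : ℕ) : ZMod n) ((b : ℕ) : ZMod n) →
      ¬((a = n-1 ∧ b = 0) ∨ (a = 0 ∧ b = n-1)) → r ((a : ℕ) : ZMod n) ((b : ℕ) : ZMod n) := by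
    intro a b ha hb hd hne
    refine ⟨hd, ?_⟩
    rintro (⟨e1, e2⟩ | ⟨e1, e2⟩)
    · exact hne (Or.inl ⟨castinj' (by omega) ha (by omega) e1, castinj' (by omega) hb (by omega) e2⟩)
    · exact hne (Or.inr ⟨castinj' (by omega) ha (by omega) e1, castinj' (by omega) hb (by omega) e2⟩)
  have rF : ∀ t, t + 1 < n → (t < n/2 ∨ ¬ Even t) → r ((t:ℕ) : ZMod n) ((t+1:ℕ) : ZMod n) :=
    fun t h1 h2 => mk t (t+1) (by omega) (by omega) (OB_F t h1 h2) (by omega)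
  have rBk : ∀ t, t + 1 < n → n/2 ≤ t → Even t → r ((t+1:ℕ) : ZMod n) ((t:ℕ) : ZMod n) :=
    fun t h1 h2 h3 => mk (t+1) t (by omega) (by omega) (OB_Bk t h1 h2 h3) (by omega)
  have rRup : ∀ j, j < n/2 → ¬ Even j → r ((j:ℕ) : ZMod n) ((j + n/2 : ℕ) : ZMod n) := by
    intro j h1 h2
    have hj2 : j % 2 = 1 := Nat.odd_iff.1 (Nat.not_even_iff_odd.1 h2)
    exact mk j (j + n/2) (by omega) (by omega) (OB_Rup j h1 h2) (by omega)
  have rRdn : ∀ t, t < n → n/2 ≤ t → Even t → r ((t:ℕ) : ZMod n) ((t - n/2 : ℕ) : ZMod n) := by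
    intro t h1 h2 h3
    have ht2 : t % 2 = 0 := Nat.even_iff.1 h3
    exact mk t (t - n/2) (by omega) (by omega) (OB_Rdn t h1 h2 h3) (by omega)
  have rK0 : r ((n/2 : ℕ) : ZMod n) ((0 : ℕ) : ZMod n) := by
    have := rRdn (n/2) (by omega) (le_refl _) hk
    rwa [Nat.sub_self] at this
  have walkF : ∀ a b : ℕ, a ≤ b → b ≤ n/2 →
      Relation.ReflTransGen r ((a:ℕ) : ZMod n) ((b:ℕ) : ZMod n) := by
    intro a b hab hbk
    exact natWalk a b hab (fun t ht1 ht2 => rF t (by omega) (Or.inl (by omega)))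
  have to0 : ∀ x : ZMod n, Relation.ReflTransGen r x ((0:ℕ) : ZMod n) := by
    intro x
    obtain ⟨a, ha, rfl⟩ : ∃ a : ℕ, a < n ∧ ((a:ℕ) : ZMod n) = x :=
      ⟨x.val, ZMod.val_lt x, ZMod.natCast_rightInverse x⟩
    rcases Nat.lt_or_ge a (n/2) with h | h
    · exact (walkF a (n/2) (by omega) (le_refl _)).tail rK0
    · rcases Nat.even_or_odd a with he | ho
      · exact (Relation.ReflTransGen.single (rRdn a ha h he)).trans
          ((walkF (a - n/2) (n/2) (by omega) (le_refl _)).tail rK0)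
      · have ha2 : a % 2 = 1 := Nat.odd_iff.1 ho
        have e1 : r ((a:ℕ) : ZMod n) ((a-1 : ℕ) : ZMod n) := by
          have := rBk (a-1) (by omega) (by omega) (by rw [Nat.even_iff]; omega)
          rwa [show a - 1 + 1 = a by omega] at this
        have e2 := rRdn (a-1) (by omega) (by omega) (by rw [Nat.even_iff]; omega)
        exact ((Relation.ReflTransGen.single e1).tail e2).trans
          ((walkF (a - 1 - n/2) (n/2) (by omega) (le_refl _)).tail rK0)
  have from0 : ∀ y : ZMod n, Relation.ReflTransGen r ((0:ℕ) : ZMod n) y := by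
    intro y
    obtain ⟨b, hb, rfl⟩ : ∃ b : ℕ, b < n ∧ ((b:ℕ) : ZMod n) = y :=
      ⟨y.val, ZMod.val_lt y, ZMod.natCast_rightInverse y⟩
    rcases Nat.lt_or_ge b (n/2) with h | h
    · exact walkF 0 b (by omega) (by omega)
    · rcases Nat.even_or_odd b with he | ho
      · have hb2 : b % 2 = 0 := Nat.even_iff.1 he
        have w1 := walkF 0 (b + 1 - n/2) (by omega) (by omega)
        have w2 := rRup (b + 1 - n/2) (by omega) (by rw [Nat.even_iff]; omega)
        rw [show b + 1 - n/2 + n/2 = b + 1 by omega] at w2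
        have w3 := rBk b (by omega) h he
        exact (w1.tail w2).tail w3
      · have hb2 : b % 2 = 1 := Nat.odd_iff.1 ho
        have w1 := walkF 0 (b - n/2) (by omega) (by omega)
        have w2 := rRup (b - n/2) (by omega) (by rw [Nat.even_iff]; omega)
        rw [show b - n/2 + n/2 = b by omega] at w2
        exact w1.tail w2
  exact fun x y => (to0 x).trans (from0 y)

private lemma B_strong (hn : 4 ≤ n) (hev : Even n) (hk : Even (n/2)) :
    IsStrong (OB hn hev hk).dir :=
  fun x y => Relation.ReflTransGen.mono (fun _ _ h => h.1) _ _ (B_del3 hn hev hk x y)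

private lemma even_mod (hev : Even n) (a : ℕ) : Even (a % n) ↔ Even a := by
  obtain ⟨m, hm⟩ := hev
  have hd := Nat.div_add_mod a n
  have hc : n * (a / n) = 2 * (m * (a / n)) := by rw [hm]; ring
  rw [Nat.even_iff, Nat.even_iff]
  omega

private lemma even_val_add [NeZero n] (hev : Even n) (x y : ZMod n) :
    Even ((x + y).val) ↔ Even (x.val + y.val) := by
  rw [ZMod.val_add, even_mod hev]

private lemma hP_even (hn : 4 ≤ n) (hev : Even n) (hko : ¬ Even (n/2)) :
    ∀ x : ZMod n, Even ((x + ((n/2:ℕ) : ZMod n)).val) ↔ ¬ Even x.val := by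
  intro x
  haveI : NeZero n := ⟨by omega⟩
  rw [even_val_add hev, ZMod.val_cast_of_lt (show n/2 < n by omega), Nat.even_add]
  tauto

private lemma shift_parity (hn : 4 ≤ n) (hev : Even n) (hko : ¬ Even (n/2)) (u : ZMod n) :
    Even ((u + ((n/2:ℕ):ZMod n) + 1).val) ↔ Even u.val := by
  haveI : NeZero n := ⟨by omega⟩
  haveI : Fact (1 < n) := ⟨by omega⟩
  rw [even_val_add hev _ 1, ZMod.val_one, Nat.even_add_one, even_val_add hev u _,
    ZMod.val_cast_of_lt (show n/2 < n by omega), Nat.even_add]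
  tauto

private lemma IsStrong_delEdge_symm {r : V → V → Prop} {u v : V}
    (h : IsStrong (delEdge r u v)) : IsStrong (delEdge r v u) :=
  fun x y => Relation.ReflTransGen.mono (fun a b hab => ⟨hab.1, fun hc => hab.2 (Or.symm hc)⟩) _ _ (h x y)

private lemma adj_cases (hn : 4 ≤ n) (hev : Even n) {u v : ZMod n}
    (h : (mobiusLadder n).Adj u v) :
    v = u + 1 ∨ u = v + 1 ∨ v = u + ((n/2:ℕ):ZMod n) ∨ u = v + ((n/2:ℕ):ZMod n) := by
  rw [mobiusLadder, SimpleGraph.fromRel_adj] at h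
  obtain ⟨hne, hc⟩ := h
  tauto

private lemma cyc_cov_odd (hn : 4 ≤ n) (hev : Even n) (hko : ¬ Even (n/2))
    (hP1 : ∀ x : ZMod n, Even ((x + ((n/2:ℕ):ZMod n)).val) ↔ ¬ Even x.val)
    (hP2 : ∀ x : ZMod n, (¬ Even ((x + ((n/2:ℕ):ZMod n)).val)) ↔ ¬ ¬ Even x.val)
    (u : ZMod n) :
    IsStrong (delEdge (OA hn hev (fun z => Even z.val) hP1).dir u (u + 1)) ∨
    IsStrong (delEdge (OA hn hev (fun z => ¬ Even z.val) hP2).dir u (u + 1)) := by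
  haveI : NeZero n := ⟨by omega⟩
  rcases Nat.even_or_odd u.val with hpar | hpar
  · left
    exact A_del_cyc hn hev hP1 u hpar ((shift_parity hn hev hko u).2 hpar)
  · right
    refine A_del_cyc hn hev hP2 u (Nat.not_even_iff_odd.2 hpar) ?_
    show ¬ Even ((u + ((n/2:ℕ):ZMod n) + 1).val)
    rw [shift_parity hn hev hko u]
    exact Nat.not_even_iff_odd.2 hpar

private lemma cyc_cov_even (hn : 4 ≤ n) (hev : Even n) (hko : Even (n/2))
    (hP1 : ∀ x : ZMod n, (¬ RB n (x + ((n/2:ℕ):ZMod n))) ↔ ¬ ¬ RB n x)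
    (u : ZMod n) :
    IsStrong (delEdge (OA hn hev (fun z => ¬ RB n z) hP1).dir u (u + 1)) ∨
    IsStrong (delEdge (OB hn hev hko).dir u (u + 1)) := by
  haveI : NeZero n := ⟨by omega⟩
  have hh := half2 hn hev
  have hn2 : n % 2 = 0 := Nat.even_iff.1 hev
  have hk2 : n/2 % 2 = 0 := Nat.even_iff.1 hko
  obtain ⟨t, htn, rfl⟩ : ∃ t : ℕ, t < n ∧ ((t:ℕ) : ZMod n) = u :=
    ⟨u.val, ZMod.val_lt u, ZMod.natCast_rightInverse u⟩
  have hval : ((t : ℕ) : ZMod n).val = t := ZMod.val_cast_of_lt htn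
  have hc1 : (((t:ℕ) : ZMod n) + 1) = ((t + 1 : ℕ) : ZMod n) := by push_cast; ring
  have hcK : (((t:ℕ) : ZMod n) + ((n/2:ℕ):ZMod n) + 1) = ((t + n/2 + 1 : ℕ) : ZMod n) := by
    push_cast; ring
  rcases Nat.lt_or_ge t (n/2) with hlow | hupp
  · rcases Nat.even_or_odd t with hpar | hpar
    · left
      have ht2 : t % 2 = 0 := Nat.even_iff.1 hpar
      refine A_del_cyc hn hev hP1 _ ?_ ?_
      · show ¬ (Even ((t : ℕ) : ZMod n).val ↔ n/2 ≤ ((t : ℕ) : ZMod n).val)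
        rw [hval]
        intro hiff
        have := hiff.1 hpar
        omega
      · show ¬ (Even (((t:ℕ) : ZMod n) + ((n/2:ℕ):ZMod n) + 1).val ↔
          n/2 ≤ (((t:ℕ) : ZMod n) + ((n/2:ℕ):ZMod n) + 1).val)
        rw [hcK, ZMod.val_cast_of_lt (by omega)]
        intro hiff
        have := Nat.even_iff.1 (hiff.2 (by omega))
        omega
    · right
      have ht2 : t % 2 = 1 := Nat.odd_iff.1 hpar
      rw [hc1]
      exact B_del1 hn hev hko t hlow (by rw [Nat.even_iff]; omega)
  · rcases Nat.even_or_odd t with hpar | hpar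
    · right
      have ht2 : t % 2 = 0 := Nat.even_iff.1 hpar
      rw [hc1]
      exact B_del2 hn hev hko t hupp hpar (by omega)
    · have ht2 : t % 2 = 1 := Nat.odd_iff.1 hpar
      rcases Nat.lt_or_ge t (n-1) with hlt | hge
      · left
        refine A_del_cyc hn hev hP1 _ ?_ ?_
        · show ¬ (Even ((t : ℕ) : ZMod n).val ↔ n/2 ≤ ((t : ℕ) : ZMod n).val)
          rw [hval]
          intro hiff
          have := Nat.even_iff.1 (hiff.2 (by omega))
          omega
        · show ¬ (Even (((t:ℕ) : ZMod n) + ((n/2:ℕ):ZMod n) + 1).val ↔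
            n/2 ≤ (((t:ℕ) : ZMod n) + ((n/2:ℕ):ZMod n) + 1).val)
          rw [hcK, cast_red (by omega) (by omega), ZMod.val_cast_of_lt (by omega)]
          intro hiff
          have := hiff.1 (Nat.even_iff.2 (by omega))
          omega
      · right
        have hteq : t = n - 1 := by omega
        subst hteq
        have e0 : (((n-1 : ℕ) : ZMod n)) + 1 = ((0:ℕ) : ZMod n) := by
          rw [Nat.cast_zero, show ((n-1:ℕ):ZMod n) + 1 = ((n-1+1:ℕ):ZMod n) by push_cast; ring,
            show n-1+1 = n by omega, ZMod.natCast_self]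
        rw [e0]
        exact B_del3 hn hev hko

private lemma two_mem (hn : 4 ≤ n) (hev : Even n) :
    ∃ Os : Fin 2 → Orient (mobiusLadder n), (∀ i, IsStrong (Os i).dir) ∧
      ∀ u v, (mobiusLadder n).Adj u v → ∃ i, EdgeDeletable (Os i) u v := by
  haveI : NeZero n := ⟨by omega⟩
  by_cases hko : Even (n/2)
  · -- n/2 even
    have hP1 : ∀ x : ZMod n, (¬ RB n (x + ((n/2:ℕ):ZMod n))) ↔ ¬ ¬ RB n x :=
      fun x => not_congr (hRB hn hev hko x)
    refine ⟨![OA hn hev (fun z => ¬ RB n z) hP1, OB hn hev hko], ?_, ?_⟩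
    · intro i
      fin_cases i
      · exact A_strong hn hev hP1
      · exact B_strong hn hev hko
    · intro u v hadj
      rcases adj_cases hn hev hadj with h | h | h | h
      · rcases cyc_cov_even hn hev hko hP1 u with hs | hs
        · refine ⟨0, ?_⟩
          rw [h]
          exact hs
        · refine ⟨1, ?_⟩
          rw [h]
          exact hs
      · rcases cyc_cov_even hn hev hko hP1 v with hs | hs
        · refine ⟨0, ?_⟩
          rw [h]
          exact IsStrong_delEdge_symm hs
        · refine ⟨1, ?_⟩
          rw [h]
          exact IsStrong_delEdge_symm hs
      · refine ⟨0, ?_⟩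
        rw [h]
        exact A_del_rung hn hev hP1 u
      · refine ⟨0, ?_⟩
        rw [h]
        exact IsStrong_delEdge_symm (A_del_rung hn hev hP1 v)
  · -- n/2 odd
    have hP1 : ∀ x : ZMod n, Even ((x + ((n/2:ℕ):ZMod n)).val) ↔ ¬ Even x.val :=
      hP_even hn hev hko
    have hP2 : ∀ x : ZMod n, (¬ Even ((x + ((n/2:ℕ):ZMod n)).val)) ↔ ¬ ¬ Even x.val :=
      fun x => not_congr (hP1 x)
    refine ⟨![OA hn hev (fun z => Even z.val) hP1, OA hn hev (fun z => ¬ Even z.val) hP2], ?_, ?_⟩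
    · intro i
      fin_cases i
      · exact A_strong hn hev hP1
      · exact A_strong hn hev hP2
    · intro u v hadj
      rcases adj_cases hn hev hadj with h | h | h | h
      · rcases cyc_cov_odd hn hev hko hP1 hP2 u with hs | hs
        · refine ⟨0, ?_⟩
          rw [h]
          exact hs
        · refine ⟨1, ?_⟩
          rw [h]
          exact hs
      · rcases cyc_cov_odd hn hev hko hP1 hP2 v with hs | hs
        · refine ⟨0, ?_⟩
          rw [h]
          exact IsStrong_delEdge_symm hs
        · refine ⟨1, ?_⟩
          rw [h]
          exact IsStrong_delEdge_symm hs
      · refine ⟨0, ?_⟩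
        rw [h]
        exact A_del_rung hn hev hP1 u
      · refine ⟨0, ?_⟩
        rw [h]
        exact IsStrong_delEdge_symm (A_del_rung hn hev hP1 v)

private lemma adj01 (hn : 4 ≤ n) (hev : Even n) : (mobiusLadder n).Adj 0 1 := by
  obtain ⟨hkk, h1, h2, hk0, hk1, hk4⟩ := zfacts hn hev
  rw [mobiusLadder, SimpleGraph.fromRel_adj]
  exact ⟨fun h => h1 h.symm, Or.inl (Or.inl (by rw [zero_add]))⟩

private lemma adjm10 (hn : 4 ≤ n) (hev : Even n) : (mobiusLadder n).Adj (-1) 0 := by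
  obtain ⟨hkk, h1, h2, hk0, hk1, hk4⟩ := zfacts hn hev
  rw [mobiusLadder, SimpleGraph.fromRel_adj]
  exact ⟨fun h => h1 (by linear_combination - h), Or.inl (Or.inl (by ring))⟩

private lemma adjK0 (hn : 4 ≤ n) (hev : Even n) :
    (mobiusLadder n).Adj ((n/2:ℕ):ZMod n) 0 := by
  obtain ⟨hkk, h1, h2, hk0, hk1, hk4⟩ := zfacts hn hev
  rw [mobiusLadder, SimpleGraph.fromRel_adj]
  exact ⟨hk0, Or.inl (Or.inr (by linear_combination - hkk))⟩

private lemma nbr0 (hn : 4 ≤ n) (hev : Even n) {x : ZMod n}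
    (h : (mobiusLadder n).Adj x 0) :
    x = 1 ∨ x = -1 ∨ x = ((n/2:ℕ):ZMod n) := by
  obtain ⟨hkk, h1, h2, hk0, hk1, hk4⟩ := zfacts hn hev
  rw [mobiusLadder, SimpleGraph.fromRel_adj] at h
  obtain ⟨hne, (hc | hc) | (hc | hc)⟩ := h
  · exact Or.inr (Or.inl (by linear_combination - hc))
  · exact Or.inr (Or.inr (by linear_combination - hc - hkk))
  · exact Or.inl (by rw [hc, zero_add])
  · exact Or.inr (Or.inr (by rw [hc, zero_add]))

private lemma one_not (hn : 4 ≤ n) (hev : Even n) :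
    ¬ ∃ Os : Fin 1 → Orient (mobiusLadder n), (∀ i, IsStrong (Os i).dir) ∧
      ∀ u v, (mobiusLadder n).Adj u v → ∃ i, EdgeDeletable (Os i) u v := by
  obtain ⟨hkk, h1, h2, hk0, hk1, hk4⟩ := zfacts hn hev
  rintro ⟨Os, hstr, hcov⟩
  set O := Os 0 with hO
  have hinx : ∀ x : ZMod n, O.dir x 0 → x = 1 ∨ x = -1 ∨ x = ((n/2:ℕ):ZMod n) :=
    fun x hx => nbr0 hn hev ((O.dir_iff x 0).1 (Or.inl hx))
  have houtx : ∀ x : ZMod n, O.dir 0 x → x = 1 ∨ x = -1 ∨ x = ((n/2:ℕ):ZMod n) :=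
    fun x hx => nbr0 hn hev ((O.dir_iff 0 x).1 (Or.inl hx)).symm
  have uniqIn : ∀ a : ZMod n, a ≠ 0 → (mobiusLadder n).Adj a 0 →
      (∀ x, O.dir x 0 → x = a) → False := by
    intro a ha hadj huniq
    obtain ⟨i, hdel⟩ := hcov a 0 hadj
    have hi : Os i = O := by rw [hO]; congr 1; exact Subsingleton.elim i 0
    rw [hi] at hdel
    rcases Relation.ReflTransGen.cases_tail (hdel a 0) with hc | ⟨c, -, hc⟩
    · exact ha hc.symm
    · exact hc.2 (Or.inl ⟨huniq c hc.1, rfl⟩)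
  have uniqOut : ∀ b : ZMod n, (mobiusLadder n).Adj 0 b →
      (∀ x, O.dir 0 x → x = b) → False := by
    intro b hadj huniq
    obtain ⟨i, hdel⟩ := hcov 0 b hadj
    have hi : Os i = O := by rw [hO]; congr 1; exact Subsingleton.elim i 0
    rw [hi] at hdel
    rcases Relation.ReflTransGen.cases_head (hdel 0 1) with hc | ⟨c, hc, -⟩
    · exact h1 hc.symm
    · exact hc.2 (Or.inl ⟨rfl, huniq c hc.1⟩)
  have e1 := (O.dir_iff 1 0).2 (adj01 hn hev).symm
  have e2 := (O.dir_iff (-1) 0).2 (adjm10 hn hev)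
  have e3 := (O.dir_iff ((n/2:ℕ):ZMod n) 0).2 (adjK0 hn hev)
  have hm1 : (-1 : ZMod n) ≠ 0 := fun h => h1 (by linear_combination - h)
  have d12 : (1 : ZMod n) ≠ -1 := fun h => h2 (by linear_combination h)
  have d13 : (1 : ZMod n) ≠ ((n/2:ℕ):ZMod n) := fun h => hk1 h.symm
  have d23 : (-1 : ZMod n) ≠ ((n/2:ℕ):ZMod n) := fun h => hk4 (by linear_combination - h)
  rcases e1 with d1 | d1 <;> rcases e2 with d2 | d2 <;> rcases e3 with d3 | d3
  · -- in, in, in : no out-arc possible, contradict strongness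
    rcases Relation.ReflTransGen.cases_head (hstr 0 0 1) with hc | ⟨c, hc, -⟩
    · exact h1 hc.symm
    · rcases houtx c hc with rfl | rfl | rfl
      · exact O.not_both 1 0 d1 hc
      · exact O.not_both (-1) 0 d2 hc
      · exact O.not_both _ 0 d3 hc
  · -- in, in, out(K)
    refine uniqOut ((n/2:ℕ):ZMod n) (adjK0 hn hev).symm (fun x hx => ?_)
    rcases houtx x hx with rfl | rfl | rfl
    · exact absurd hx (O.not_both 1 0 d1)
    · exact absurd hx (O.not_both (-1) 0 d2)
    · rfl
  · -- in, out(-1), in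
    refine uniqOut (-1) (adjm10 hn hev).symm (fun x hx => ?_)
    rcases houtx x hx with rfl | rfl | rfl
    · exact absurd hx (O.not_both 1 0 d1)
    · rfl
    · exact absurd hx (O.not_both _ 0 d3)
  · -- in, out, out : unique in = 1
    refine uniqIn 1 h1 (adj01 hn hev).symm (fun x hx => ?_)
    rcases hinx x hx with rfl | rfl | rfl
    · rfl
    · exact absurd hx (O.not_both 0 (-1) d2)
    · exact absurd hx (O.not_both 0 _ d3)
  · -- out(1), in, in
    refine uniqOut 1 (adj01 hn hev) (fun x hx => ?_)
    rcases houtx x hx with rfl | rfl | rfl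
    · rfl
    · exact absurd hx (O.not_both (-1) 0 d2)
    · exact absurd hx (O.not_both _ 0 d3)
  · -- out, in, out : unique in = -1
    refine uniqIn (-1) hm1 (adjm10 hn hev) (fun x hx => ?_)
    rcases hinx x hx with rfl | rfl | rfl
    · exact absurd hx (O.not_both 0 1 d1)
    · rfl
    · exact absurd hx (O.not_both 0 _ d3)
  · -- out, out, in : unique in = K
    refine uniqIn ((n/2:ℕ):ZMod n) hk0 (adjK0 hn hev) (fun x hx => ?_)
    rcases hinx x hx with rfl | rfl | rfl
    · exact absurd hx (O.not_both 0 1 d1)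
    · exact absurd hx (O.not_both 0 (-1) d2)
    · rfl
  · -- out, out, out : no in-arc, contradict strongness
    rcases Relation.ReflTransGen.cases_tail (hstr 0 1 0) with hc | ⟨c, -, hc⟩
    · exact h1 hc.symm
    · rcases hinx c hc with rfl | rfl | rfl
      · exact O.not_both 0 1 d1 hc
      · exact O.not_both 0 (-1) d2 hc
      · exact O.not_both 0 _ d3 hc

private lemma zero_not (hn : 4 ≤ n) (hev : Even n) :
    ¬ ∃ Os : Fin 0 → Orient (mobiusLadder n), (∀ i, IsStrong (Os i).dir) ∧
      ∀ u v, (mobiusLadder n).Adj u v → ∃ i, EdgeDeletable (Os i) u v := by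
  rintro ⟨Os, -, hcov⟩
  obtain ⟨i, -⟩ := hcov 0 1 (adj01 hn hev)
  exact i.elim0

end Aux

theorem stmt_7 (n : ℕ) (hn : 4 ≤ n) (hev : Even n) : frankNumber (mobiusLadder n) = 2 := by
  have hA : (2:ℕ) ∈ {k | ∃ Os : Fin k → Orient (mobiusLadder n), (∀ i, IsStrong (Os i).dir) ∧
      ∀ u v, (mobiusLadder n).Adj u v → ∃ i, EdgeDeletable (Os i) u v} := two_mem hn hev
  have hle : frankNumber (mobiusLadder n) ≤ 2 := Nat.sInf_le hA
  have hmem : frankNumber (mobiusLadder n) ∈ {k | ∃ Os : Fin k → Orient (mobiusLadder n),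
      (∀ i, IsStrong (Os i).dir) ∧
      ∀ u v, (mobiusLadder n).Adj u v → ∃ i, EdgeDeletable (Os i) u v} :=
    Nat.sInf_mem ⟨2, hA⟩
  rcases lt_or_ge (frankNumber (mobiusLadder n)) 2 with h | h
  · exfalso
    have h01 : frankNumber (mobiusLadder n) = 0 ∨ frankNumber (mobiusLadder n) = 1 := by omega
    rcases h01 with h' | h'
    · rw [h'] at hmem
      exact zero_not hn hev hmem
    · rw [h'] at hmem
      exact one_not hn hev hmem
  · omega

end Frank
end

section
/- For every integer k ≥ 3, the prism P_k = C_k × K_2 has Frank number 2. -/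
namespace Frank

variable {V : Type*}

/-- The prism `C_k × K_2`: two `k`-cycles joined by spokes. -/
def prism (k : ℕ) : SimpleGraph (ZMod k × Bool) :=
  SimpleGraph.fromRel (fun a b =>
    (a.2 = b.2 ∧ b.1 = a.1 + 1) ∨ (a.1 = b.1 ∧ a.2 ≠ b.2))



section ZModFacts
variable {k : ℕ}

lemma cast_ne_cast {a m : ℕ} (h1 : a < m) (h2 : m < a + k) :
    (m : ZMod k) ≠ (a : ZMod k) := by
  intro h
  rw [ZMod.natCast_eq_natCast_iff] at h
  have h' := (Nat.modEq_iff_dvd' (Nat.le_of_lt h1)).mp h.symm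
  have := Nat.le_of_dvd (by omega) h'
  omega

lemma cast_ne_of_val [NeZero k] {c : ZMod k} {x m : ℕ} (hm : x ≤ m)
    (hlt : m - x < (c - (x : ZMod k)).val) : (m : ZMod k) ≠ c := by
  intro h
  have h2 : ((m - x : ℕ) : ZMod k) = c - (x : ZMod k) := by
    rw [Nat.cast_sub hm, h]
  have h3 : (m - x) % k = (c - (x : ZMod k)).val := by
    rw [← ZMod.val_natCast, h2]
  have h4 : m - x < k := lt_of_lt_of_le hlt (le_of_lt (ZMod.val_lt _))
  rw [Nat.mod_eq_of_lt h4] at h3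
  omega

lemma cast_val_add [NeZero k] (x : ℕ) (j : ZMod k) :
    ((x + (j - (x : ZMod k)).val : ℕ) : ZMod k) = j := by
  push_cast
  rw [ZMod.natCast_rightInverse (j - (x : ZMod k))]
  ring

lemma neg_one_eq_cast (hk : 1 ≤ k) : (-1 : ZMod k) = ((k - 1 : ℕ) : ZMod k) := by
  have h0 : ((k : ℕ) : ZMod k) = 0 := ZMod.natCast_self k
  have : ((k - 1 : ℕ) : ZMod k) + 1 = 0 := by
    have : ((k - 1 : ℕ) : ZMod k) + ((1 : ℕ) : ZMod k) = ((k - 1 + 1 : ℕ) : ZMod k) := by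
      push_cast; ring
    rw [Nat.cast_one] at this
    rw [this, Nat.sub_add_cancel hk, h0]
  exact neg_eq_of_add_eq_zero_left this

lemma one_ne_zero' (hk : 3 ≤ k) : (1 : ZMod k) ≠ 0 := by
  have := cast_ne_cast (k := k) (a := 0) (m := 1) (by omega) (by omega)
  simpa using this

lemma two_ne_zero' (hk : 3 ≤ k) : (2 : ZMod k) ≠ 0 := by
  have := cast_ne_cast (k := k) (a := 0) (m := 2) (by omega) (by omega)
  simpa using this

lemma add_one_ne (hk : 3 ≤ k) (x : ZMod k) : x + 1 ≠ x := by
  intro h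
  have : (1 : ZMod k) = 0 := by linear_combination h
  exact one_ne_zero' hk this

lemma no_two_cycle (hk : 3 ≤ k) {a b : ZMod k} (h1 : b = a + 1) (h2 : a = b + 1) : False := by
  rw [h1] at h2
  have : (2 : ZMod k) = 0 := by linear_combination h2.symm
  exact two_ne_zero' hk this

end ZModFacts

section Reach
variable {k : ℕ} {r : ZMod k × Bool → ZMod k × Bool → Prop}

lemma reach_fwd (b : Bool) (x n : ℕ)
    (h : ∀ m, x ≤ m → m < x + n → r ((m : ZMod k), b) (((m + 1 : ℕ) : ZMod k), b)) :
    Relation.ReflTransGen r ((x : ZMod k), b) (((x + n : ℕ) : ZMod k), b) := by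
  induction n with
  | zero => exact .refl
  | succ n ih =>
    exact (ih (fun m h1 h2 => h m h1 (by omega))).tail
      (by have := h (x + n) (by omega) (by omega); convert this using 3; omega)

lemma reach_bwd (b : Bool) (x n : ℕ)
    (h : ∀ m, x ≤ m → m < x + n → r (((m + 1 : ℕ) : ZMod k), b) ((m : ZMod k), b)) :
    Relation.ReflTransGen r (((x + n : ℕ) : ZMod k), b) ((x : ZMod k), b) := by
  induction n with
  | zero => exact .refl
  | succ n ih =>
    refine Relation.ReflTransGen.head ?_ (ih (fun m h1 h2 => h m h1 (by omega)))
    have := h (x + n) (by omega) (by omega)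
    convert this using 3
    omega

end Reach


section Orientations
variable {k : ℕ}

/-- Orientation builder: `ff i` says the bottom-cycle edge `(i,i+1)` is directed forward,
`ft` same for top cycle, `sp i` says spoke `i` is directed bottom-to-top. -/
def Odir (ff ft sp : ZMod k → Bool) : ZMod k × Bool → ZMod k × Bool → Prop := fun a b =>
  (a.2 = false ∧ b.2 = false ∧ ((b.1 = a.1 + 1 ∧ ff a.1 = true) ∨ (a.1 = b.1 + 1 ∧ ff b.1 = false))) ∨
  (a.2 = true ∧ b.2 = true ∧ ((b.1 = a.1 + 1 ∧ ft a.1 = true) ∨ (a.1 = b.1 + 1 ∧ ft b.1 = false))) ∨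
  (a.1 = b.1 ∧ ((a.2 = false ∧ b.2 = true ∧ sp a.1 = true) ∨ (a.2 = true ∧ b.2 = false ∧ sp a.1 = false)))

lemma Odir_iff (hk : 3 ≤ k) (ff ft sp : ZMod k → Bool) (u v : ZMod k × Bool) :
    (Odir ff ft sp u v ∨ Odir ff ft sp v u) ↔ (prism k).Adj u v := by
  obtain ⟨x, bx⟩ := u
  obtain ⟨y, by'⟩ := v
  rw [prism, SimpleGraph.fromRel_adj]
  have hne : ∀ x y : ZMod k, y = x + 1 → ¬ (x = y) := by
    intro x y h h'
    rw [h'] at h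
    exact add_one_ne hk y h.symm
  cases bx <;> cases by' <;>
    simp only [Odir, Prod.mk.injEq, ne_eq, Bool.true_eq_false, Bool.false_eq_true,
      and_true, and_false, false_and, true_and, and_self, or_false, false_or,
      not_false_iff, not_true, iff_false, iff_true]
  · constructor
    · rintro ((⟨h,-⟩|⟨h,-⟩)|(⟨h,-⟩|⟨h,-⟩))
      · exact ⟨hne _ _ h, Or.inl h⟩
      · exact ⟨fun hc => hne _ _ h hc.symm, Or.inr h⟩
      · exact ⟨fun hc => hne _ _ h hc.symm, Or.inr h⟩
      · exact ⟨hne _ _ h, Or.inl h⟩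
    · rintro ⟨-, (h|h)⟩
      · cases hff : ff x with
        | false => exact Or.inr (Or.inr ⟨h, rfl⟩)
        | true => exact Or.inl (Or.inl ⟨h, rfl⟩)
      · cases hff : ff y with
        | false => exact Or.inl (Or.inr ⟨h, rfl⟩)
        | true => exact Or.inr (Or.inl ⟨h, rfl⟩)
  · constructor
    · rintro (⟨h,-⟩|⟨h,-⟩)
      · exact Or.inl h
      · exact Or.inr h
    · intro h
      have hxy : x = y := by tauto
      subst hxy
      cases hsp : sp x with
      | true => exact Or.inl ⟨rfl, rfl⟩
      | false => exact Or.inr ⟨rfl, rfl⟩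
  · constructor
    · rintro (⟨h,-⟩|⟨h,-⟩)
      · exact Or.inl h
      · exact Or.inr h
    · intro h
      have hxy : x = y := by tauto
      subst hxy
      cases hsp : sp x with
      | false => exact Or.inl ⟨rfl, rfl⟩
      | true => exact Or.inr ⟨rfl, rfl⟩
  · constructor
    · rintro ((⟨h,-⟩|⟨h,-⟩)|(⟨h,-⟩|⟨h,-⟩))
      · exact ⟨hne _ _ h, Or.inl h⟩
      · exact ⟨fun hc => hne _ _ h hc.symm, Or.inr h⟩
      · exact ⟨fun hc => hne _ _ h hc.symm, Or.inr h⟩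
      · exact ⟨hne _ _ h, Or.inl h⟩
    · rintro ⟨-, (h|h)⟩
      · cases hff : ft x with
        | false => exact Or.inr (Or.inr ⟨h, rfl⟩)
        | true => exact Or.inl (Or.inl ⟨h, rfl⟩)
      · cases hff : ft y with
        | false => exact Or.inl (Or.inr ⟨h, rfl⟩)
        | true => exact Or.inr (Or.inl ⟨h, rfl⟩)

lemma Odir_asymm (hk : 3 ≤ k) (ff ft sp : ZMod k → Bool) (u v : ZMod k × Bool) :
    Odir ff ft sp u v → ¬ Odir ff ft sp v u := by
  rintro (⟨hu, hv, (⟨h, hb⟩|⟨h, hb⟩)⟩ | ⟨hu, hv, (⟨h, hb⟩|⟨h, hb⟩)⟩ |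
      ⟨h, (⟨hu, hv, hb⟩|⟨hu, hv, hb⟩)⟩) <;>
    rintro (⟨hu', hv', (⟨h', hb'⟩|⟨h', hb'⟩)⟩ | ⟨hu', hv', (⟨h', hb'⟩|⟨h', hb'⟩)⟩ |
      ⟨h', (⟨hu', hv', hb'⟩|⟨hu', hv', hb'⟩)⟩) <;>
    first
      | exact no_two_cycle hk h h'
      | exact no_two_cycle hk h' h
      | simp_all

end Orientations

section Cfg
variable {k : ℕ} {r : ZMod k × Bool → ZMod k × Bool → Prop}

lemma val_cast (i : ZMod k) [NeZero k] : ((i.val : ℕ) : ZMod k) = i :=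
  ZMod.natCast_rightInverse i

lemma cast_succ (m : ℕ) : ((m + 1 : ℕ) : ZMod k) = (m : ZMod k) + 1 := by push_cast; ring

lemma val_sub_cast [NeZero k] {j : ZMod k} {x : ℕ} (h : x ≤ j.val) :
    (j - (x : ZMod k)).val = j.val - x := by
  have h1 : j - (x : ZMod k) = ((j.val - x : ℕ) : ZMod k) := by
    rw [Nat.cast_sub h, val_cast]
  rw [h1, ZMod.val_natCast, Nat.mod_eq_of_lt (by have := ZMod.val_lt j; omega)]

lemma reach_fwd_to [NeZero k] (b : Bool) (x : ℕ) (j : ZMod k)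
    (h : ∀ m, x ≤ m → m < x + (j - (x : ZMod k)).val →
      r ((m : ZMod k), b) (((m + 1 : ℕ) : ZMod k), b)) :
    Relation.ReflTransGen r ((x : ZMod k), b) (j, b) := by
  have := reach_fwd (r := r) b x ((j - (x : ZMod k)).val) h
  rwa [cast_val_add] at this

lemma reach_bwd_from [NeZero k] (b : Bool) (x : ℕ) (j : ZMod k)
    (h : ∀ m, x ≤ m → m < x + (j - (x : ZMod k)).val →
      r (((m + 1 : ℕ) : ZMod k), b) ((m : ZMod k), b)) :
    Relation.ReflTransGen r (j, b) ((x : ZMod k), b) := by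
  have := reach_bwd (r := r) b x ((j - (x : ZMod k)).val) h
  rwa [cast_val_add] at this

/-- Full forward bottom cycle, full backward top cycle, one up spoke, one down spoke. -/
lemma cfg0 (hk : 3 ≤ k) (p q : ZMod k)
    (hf : ∀ i : ZMod k, r (i, false) (i + 1, false))
    (ht : ∀ i : ZMod k, r (i + 1, true) (i, true))
    (hup : r (p, false) (p, true))
    (hdn : r (q, true) (q, false)) : IsStrong r := by
  haveI : NeZero k := ⟨by omega⟩
  have A : ∀ i j : ZMod k, Relation.ReflTransGen r (i, false) (j, false) := by
    intro i j
    have := reach_fwd_to (r := r) false i.val j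
      (fun m _ _ => by rw [cast_succ]; exact hf _)
    rwa [val_cast] at this
  have B : ∀ i j : ZMod k, Relation.ReflTransGen r (i, true) (j, true) := by
    intro i j
    have := reach_bwd_from (r := r) true j.val i
      (fun m _ _ => by rw [cast_succ]; exact ht _)
    rwa [val_cast] at this
  rintro ⟨j, bj⟩ ⟨j', bj'⟩
  have Hto : Relation.ReflTransGen r ((j : ZMod k), bj) (p, true) := by
    cases bj
    · exact (A j p).tail hup
    · exact B j p
  have Hfrom : Relation.ReflTransGen r (p, true) ((j' : ZMod k), bj') := by
    cases bj'
    · exact ((B p q).tail hdn).trans (A q j')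
    · exact B p j'
  exact Hto.trans Hfrom

/-- Forward bottom cycle with gap at `a`, backward top cycle with gap at `a`,
up spoke at `a`, down spoke at `a+1`. -/
lemma cfg1 (hk : 3 ≤ k) (a : ℕ)
    (hf : ∀ i : ZMod k, i ≠ (a : ZMod k) → r (i, false) (i + 1, false))
    (ht : ∀ i : ZMod k, i ≠ (a : ZMod k) → r (i + 1, true) (i, true))
    (hup : r ((a : ZMod k), false) ((a : ZMod k), true))
    (hdn : r (((a + 1 : ℕ) : ZMod k), true) (((a + 1 : ℕ) : ZMod k), false)) :
    IsStrong r := by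
  haveI : NeZero k := ⟨by omega⟩
  have A : ∀ j : ZMod k, Relation.ReflTransGen r (((a + 1 : ℕ) : ZMod k), false) (j, false) := by
    intro j
    refine reach_fwd_to false (a + 1) j (fun m h1 h2 => ?_)
    rw [cast_succ]
    refine hf _ (cast_ne_cast (by omega) ?_)
    have := ZMod.val_lt (j - ((a + 1 : ℕ) : ZMod k))
    omega
  have A' : ∀ j : ZMod k, Relation.ReflTransGen r (j, false) ((a : ZMod k), false) := by
    intro j
    have := reach_fwd_to (r := r) false j.val ((a : ZMod k)) (fun m h1 h2 => by
      rw [cast_succ]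
      exact hf _ (cast_ne_of_val h1 (by omega)))
    rwa [val_cast] at this
  have B : ∀ j : ZMod k, Relation.ReflTransGen r (j, true) (((a + 1 : ℕ) : ZMod k), true) := by
    intro j
    refine reach_bwd_from true (a + 1) j (fun m h1 h2 => ?_)
    rw [cast_succ]
    refine ht _ (cast_ne_cast (by omega) ?_)
    have := ZMod.val_lt (j - ((a + 1 : ℕ) : ZMod k))
    omega
  have B' : ∀ j : ZMod k, Relation.ReflTransGen r ((a : ZMod k), true) (j, true) := by
    intro j
    have := reach_bwd_from (r := r) true j.val ((a : ZMod k)) (fun m h1 h2 => by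
      rw [cast_succ]
      exact ht _ (cast_ne_of_val h1 (by omega)))
    rwa [val_cast] at this
  rintro ⟨j, bj⟩ ⟨j', bj'⟩
  have Hto : Relation.ReflTransGen r ((j : ZMod k), bj) ((a : ZMod k), true) := by
    cases bj
    · exact (A' j).tail hup
    · exact ((B j).tail hdn).trans ((A' _).tail hup)
  have Hfrom : Relation.ReflTransGen r ((a : ZMod k), true) ((j' : ZMod k), bj') := by
    cases bj'
    · exact ((B' _).tail hdn).trans (A j')
    · exact B' j'
  exact Hto.trans Hfrom

/-- Backward bottom cycle with gap at `a`, forward top cycle with gap at `a`,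
down spoke at `a`, up spoke at `a+1`. -/
lemma cfg2 (hk : 3 ≤ k) (a : ℕ)
    (hf : ∀ i : ZMod k, i ≠ (a : ZMod k) → r (i + 1, false) (i, false))
    (ht : ∀ i : ZMod k, i ≠ (a : ZMod k) → r (i, true) (i + 1, true))
    (hdn : r ((a : ZMod k), true) ((a : ZMod k), false))
    (hup : r (((a + 1 : ℕ) : ZMod k), false) (((a + 1 : ℕ) : ZMod k), true)) :
    IsStrong r := by
  haveI : NeZero k := ⟨by omega⟩
  have A : ∀ j : ZMod k, Relation.ReflTransGen r (j, false) (((a + 1 : ℕ) : ZMod k), false) := by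
    intro j
    refine reach_bwd_from false (a + 1) j (fun m h1 h2 => ?_)
    rw [cast_succ]
    refine hf _ (cast_ne_cast (by omega) ?_)
    have := ZMod.val_lt (j - ((a + 1 : ℕ) : ZMod k))
    omega
  have A' : ∀ j : ZMod k, Relation.ReflTransGen r ((a : ZMod k), false) (j, false) := by
    intro j
    have := reach_bwd_from (r := r) false j.val ((a : ZMod k)) (fun m h1 h2 => by
      rw [cast_succ]
      exact hf _ (cast_ne_of_val h1 (by omega)))
    rwa [val_cast] at this
  have B : ∀ j : ZMod k, Relation.ReflTransGen r (((a + 1 : ℕ) : ZMod k), true) (j, true) := by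
    intro j
    refine reach_fwd_to true (a + 1) j (fun m h1 h2 => ?_)
    rw [cast_succ]
    refine ht _ (cast_ne_cast (by omega) ?_)
    have := ZMod.val_lt (j - ((a + 1 : ℕ) : ZMod k))
    omega
  have B' : ∀ j : ZMod k, Relation.ReflTransGen r (j, true) ((a : ZMod k), true) := by
    intro j
    have := reach_fwd_to (r := r) true j.val ((a : ZMod k)) (fun m h1 h2 => by
      rw [cast_succ]
      exact ht _ (cast_ne_of_val h1 (by omega)))
    rwa [val_cast] at this
  rintro ⟨j, bj⟩ ⟨j', bj'⟩
  have Hto : Relation.ReflTransGen r ((j : ZMod k), bj) ((a : ZMod k), false) := by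
    cases bj
    · exact ((A j).tail hup).trans ((B' _).tail hdn)
    · exact (B' j).tail hdn
  have Hfrom : Relation.ReflTransGen r ((a : ZMod k), false) ((j' : ZMod k), bj') := by
    cases bj'
    · exact A' j'
    · exact ((A' _).tail hup).trans (B j')
  exact Hto.trans Hfrom

end Cfg

section Cfg2
variable {k : ℕ} {r : ZMod k × Bool → ZMod k × Bool → Prop}

/-- O2 with bottom edge `e_{i0}` deleted, `i0` odd, `i0 + 2 < k`. -/
lemma cfgAe (hk : 3 ≤ k) (i0 : ℕ) (hi : i0 + 2 < k)
    (hfb : ∀ j : ZMod k, j ≠ -1 → j ≠ (i0 : ZMod k) → r (j + 1, false) (j, false))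
    (hff : r (-1, false) (((0 : ℕ) : ZMod k), false))
    (htf : ∀ j : ZMod k, j ≠ -1 → r (j, true) (j + 1, true))
    (hup0 : r (((0 : ℕ) : ZMod k), false) (((0 : ℕ) : ZMod k), true))
    (hupi : r (((i0 + 1 : ℕ) : ZMod k), false) (((i0 + 1 : ℕ) : ZMod k), true))
    (hdni : r (((i0 : ℕ) : ZMod k), true) (((i0 : ℕ) : ZMod k), false))
    (hdnk : r (-1, true) (-1, false)) : IsStrong r := by
  haveI : NeZero k := ⟨by omega⟩
  have hneg : (-1 : ZMod k) = ((k - 1 : ℕ) : ZMod k) := neg_one_eq_cast (by omega)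
  have hvneg : (-1 : ZMod k).val = k - 1 := by
    rw [hneg, ZMod.val_natCast, Nat.mod_eq_of_lt (by omega)]
  have hne1 : ∀ m : ℕ, m < k - 1 → (m : ZMod k) ≠ -1 := fun m hm => by
    rw [hneg]; exact (cast_ne_cast hm (by omega)).symm
  have Tup : ∀ j : ZMod k, Relation.ReflTransGen r (((0 : ℕ) : ZMod k), true) (j, true) := by
    intro j
    refine reach_fwd_to true 0 j (fun m h1 h2 => ?_)
    rw [cast_succ]
    refine htf _ (hne1 m ?_)
    have hb := ZMod.val_lt (j - ((0 : ℕ) : ZMod k))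
    omega
  have Tdn : ∀ j : ZMod k, Relation.ReflTransGen r (j, true) (((0 : ℕ) : ZMod k), true) := by
    intro j
    have seg : Relation.ReflTransGen r (j, true) ((-1 : ZMod k), true) := by
      have := reach_fwd_to (r := r) true j.val (-1 : ZMod k) (fun m h1 h2 => by
        rw [cast_succ]
        exact htf _ (cast_ne_of_val h1 (by omega)))
      rwa [val_cast] at this
    exact ((seg.tail hdnk).tail hff).tail hup0
  have Fto : ∀ j : ZMod k, Relation.ReflTransGen r (j, false) (((0 : ℕ) : ZMod k), true) := by
    intro j
    rcases le_or_gt j.val i0 with hle | hgt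
    · have seg : Relation.ReflTransGen r (j, false) (((0 : ℕ) : ZMod k), false) := by
        refine reach_bwd_from false 0 j (fun m h1 h2 => ?_)
        have hb : (j - ((0 : ℕ) : ZMod k)).val = j.val := by
          rw [Nat.cast_zero, sub_zero]
        rw [cast_succ]
        exact hfb _ (hne1 m (by omega)) ((cast_ne_cast (show m < i0 by omega) (by omega)).symm)
      exact seg.tail hup0
    · have seg : Relation.ReflTransGen r (j, false) (((i0 + 1 : ℕ) : ZMod k), false) := by
        refine reach_bwd_from false (i0 + 1) j (fun m h1 h2 => ?_)
        have hb : (j - ((i0 + 1 : ℕ) : ZMod k)).val = j.val - (i0 + 1) := val_sub_cast (by omega)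
        have hjv := ZMod.val_lt j
        rw [cast_succ]
        exact hfb _ (hne1 m (by omega)) (cast_ne_cast (show i0 < m by omega) (by omega))
      exact ((seg.tail hupi).trans (Tdn _))
  have Ffrom : ∀ j : ZMod k, Relation.ReflTransGen r (((0 : ℕ) : ZMod k), true) (j, false) := by
    intro j
    rcases le_or_gt j.val i0 with hle | hgt
    · have hv0 : ((i0 : ℕ) : ZMod k).val = i0 := by
        rw [ZMod.val_natCast, Nat.mod_eq_of_lt (by omega)]
      have seg2 : Relation.ReflTransGen r (((i0 : ℕ) : ZMod k), false) (j, false) := by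
        have := reach_bwd_from (r := r) false j.val ((i0 : ℕ) : ZMod k) (fun m h1 h2 => by
          have hb : (((i0 : ℕ) : ZMod k) - ((j.val : ℕ) : ZMod k)).val = i0 - j.val := by
            rw [val_sub_cast (by rw [hv0]; omega), hv0]
          rw [cast_succ]
          exact hfb _ (hne1 m (by omega))
            ((cast_ne_cast (show m < i0 by omega) (by omega)).symm))
        rwa [val_cast] at this
      exact ((Tup _).tail hdni).trans seg2
    · have seg2 : Relation.ReflTransGen r ((-1 : ZMod k), false) (j, false) := by
        have := reach_bwd_from (r := r) false j.val (-1 : ZMod k) (fun m h1 h2 => by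
          have hb : ((-1 : ZMod k) - ((j.val : ℕ) : ZMod k)).val = (k - 1) - j.val := by
            rw [val_sub_cast (by rw [hvneg]; have := ZMod.val_lt j; omega), hvneg]
          rw [cast_succ]
          exact hfb _ (hne1 m (by omega)) (cast_ne_cast (show i0 < m by omega) (by omega)))
        rwa [val_cast] at this
      exact ((Tup _).tail hdnk).trans seg2
  rintro ⟨j, bj⟩ ⟨j', bj'⟩
  have Hto : Relation.ReflTransGen r (j, bj) (((0 : ℕ) : ZMod k), true) := by
    cases bj
    · exact Fto j
    · exact Tdn j
  have Hfrom : Relation.ReflTransGen r (((0 : ℕ) : ZMod k), true) (j', bj') := by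
    cases bj'
    · exact Ffrom j'
    · exact Tup j'
  exact Hto.trans Hfrom

end Cfg2

section Cfg3
variable {k : ℕ} {r : ZMod k × Bool → ZMod k × Bool → Prop}

/-- O2 with top edge `t_{i0}` deleted, `i0` odd, `i0 + 2 < k`. -/
lemma cfgAt (hk : 3 ≤ k) (i0 : ℕ) (hi : i0 + 2 < k)
    (hfb : ∀ j : ZMod k, j ≠ -1 → r (j + 1, false) (j, false))
    (hff : r (-1, false) (((0 : ℕ) : ZMod k), false))
    (htf : ∀ j : ZMod k, j ≠ -1 → j ≠ (i0 : ZMod k) → r (j, true) (j + 1, true))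
    (htflip : r (((0 : ℕ) : ZMod k), true) (-1, true))
    (hup0 : r (((0 : ℕ) : ZMod k), false) (((0 : ℕ) : ZMod k), true))
    (hupi : r (((i0 + 1 : ℕ) : ZMod k), false) (((i0 + 1 : ℕ) : ZMod k), true))
    (hdni : r (((i0 : ℕ) : ZMod k), true) (((i0 : ℕ) : ZMod k), false))
    (hdnk : r (-1, true) (-1, false)) : IsStrong r := by
  haveI : NeZero k := ⟨by omega⟩
  have hneg : (-1 : ZMod k) = ((k - 1 : ℕ) : ZMod k) := neg_one_eq_cast (by omega)
  have hvneg : (-1 : ZMod k).val = k - 1 := by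
    rw [hneg, ZMod.val_natCast, Nat.mod_eq_of_lt (by omega)]
  have hne1 : ∀ m : ℕ, m < k - 1 → (m : ZMod k) ≠ -1 := fun m hm => by
    rw [hneg]; exact (cast_ne_cast hm (by omega)).symm
  have hv0 : ((i0 : ℕ) : ZMod k).val = i0 := by
    rw [ZMod.val_natCast, Nat.mod_eq_of_lt (by omega)]
  have Fdn : ∀ j : ZMod k, Relation.ReflTransGen r (j, false) (((0 : ℕ) : ZMod k), false) := by
    intro j
    refine reach_bwd_from false 0 j (fun m h1 h2 => ?_)
    have hb : (j - ((0 : ℕ) : ZMod k)).val = j.val := by rw [Nat.cast_zero, sub_zero]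
    have hjv := ZMod.val_lt j
    rw [cast_succ]
    exact hfb _ (hne1 m (by omega))
  have Fup : ∀ j : ZMod k, Relation.ReflTransGen r (((0 : ℕ) : ZMod k), false) (j, false) := by
    intro j
    have s0 : Relation.ReflTransGen r (((0 : ℕ) : ZMod k), false) ((-1 : ZMod k), false) :=
      ((Relation.ReflTransGen.refl.tail hup0).tail htflip).tail hdnk
    have seg : Relation.ReflTransGen r ((-1 : ZMod k), false) (j, false) := by
      have := reach_bwd_from (r := r) false j.val (-1 : ZMod k) (fun m h1 h2 => by
        have hb : ((-1 : ZMod k) - ((j.val : ℕ) : ZMod k)).val = (k - 1) - j.val := by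
          rw [val_sub_cast (by rw [hvneg]; have := ZMod.val_lt j; omega), hvneg]
        rw [cast_succ]
        exact hfb _ (hne1 m (by omega)))
      rwa [val_cast] at this
    exact s0.trans seg
  have Tto : ∀ j : ZMod k, Relation.ReflTransGen r (j, true) (((0 : ℕ) : ZMod k), false) := by
    intro j
    rcases le_or_gt j.val i0 with hle | hgt
    · have seg : Relation.ReflTransGen r (j, true) (((i0 : ℕ) : ZMod k), true) := by
        have := reach_fwd_to (r := r) true j.val ((i0 : ℕ) : ZMod k) (fun m h1 h2 => by
          have hb : (((i0 : ℕ) : ZMod k) - ((j.val : ℕ) : ZMod k)).val = i0 - j.val := by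
            rw [val_sub_cast (by rw [hv0]; omega), hv0]
          rw [cast_succ]
          exact htf _ (hne1 m (by omega))
            ((cast_ne_cast (show m < i0 by omega) (by omega)).symm))
        rwa [val_cast] at this
      exact (seg.tail hdni).trans (Fdn _)
    · have seg : Relation.ReflTransGen r (j, true) ((-1 : ZMod k), true) := by
        have := reach_fwd_to (r := r) true j.val (-1 : ZMod k) (fun m h1 h2 => by
          have hb : ((-1 : ZMod k) - ((j.val : ℕ) : ZMod k)).val = (k - 1) - j.val := by
            rw [val_sub_cast (by rw [hvneg]; have := ZMod.val_lt j; omega), hvneg]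
          rw [cast_succ]
          exact htf _ (cast_ne_of_val h1 (by omega))
            (cast_ne_cast (show i0 < m by omega) (by omega)))
        rwa [val_cast] at this
      exact (seg.tail hdnk).trans (Fdn _)
  have Tfrom : ∀ j : ZMod k, Relation.ReflTransGen r (((0 : ℕ) : ZMod k), false) (j, true) := by
    intro j
    rcases le_or_gt j.val i0 with hle | hgt
    · have seg : Relation.ReflTransGen r (((0 : ℕ) : ZMod k), true) (j, true) := by
        refine reach_fwd_to true 0 j (fun m h1 h2 => ?_)
        have hb : (j - ((0 : ℕ) : ZMod k)).val = j.val := by rw [Nat.cast_zero, sub_zero]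
        rw [cast_succ]
        exact htf _ (hne1 m (by omega))
          ((cast_ne_cast (show m < i0 by omega) (by omega)).symm)
      exact (Relation.ReflTransGen.refl.tail hup0).trans seg
    · have seg : Relation.ReflTransGen r (((i0 + 1 : ℕ) : ZMod k), true) (j, true) := by
        refine reach_fwd_to true (i0 + 1) j (fun m h1 h2 => ?_)
        have hb : (j - ((i0 + 1 : ℕ) : ZMod k)).val = j.val - (i0 + 1) := val_sub_cast (by omega)
        have hjv := ZMod.val_lt j
        rw [cast_succ]
        exact htf _ (hne1 m (by omega)) (cast_ne_cast (show i0 < m by omega) (by omega))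
      exact ((Fup _).tail hupi).trans seg
  rintro ⟨j, bj⟩ ⟨j', bj'⟩
  have Hto : Relation.ReflTransGen r (j, bj) (((0 : ℕ) : ZMod k), false) := by
    cases bj
    · exact Fdn j
    · exact Tto j
  have Hfrom : Relation.ReflTransGen r (((0 : ℕ) : ZMod k), false) (j', bj') := by
    cases bj'
    · exact Fup j'
    · exact Tfrom j'
  exact Hto.trans Hfrom

/-- O2 with bottom edge `e_{k-2}` deleted (k odd case). -/
lemma cfgBe (hk : 3 ≤ k)
    (hfb : ∀ j : ZMod k, j ≠ -1 → j ≠ ((k - 2 : ℕ) : ZMod k) → r (j + 1, false) (j, false))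
    (hff : r (-1, false) (((0 : ℕ) : ZMod k), false))
    (htf : ∀ j : ZMod k, j ≠ -1 → r (j, true) (j + 1, true))
    (hup0 : r (((0 : ℕ) : ZMod k), false) (((0 : ℕ) : ZMod k), true))
    (hdn2 : r (((k - 2 : ℕ) : ZMod k), true) (((k - 2 : ℕ) : ZMod k), false))
    (hdnk : r (-1, true) (-1, false)) : IsStrong r := by
  haveI : NeZero k := ⟨by omega⟩
  have hneg : (-1 : ZMod k) = ((k - 1 : ℕ) : ZMod k) := neg_one_eq_cast (by omega)
  have hvneg : (-1 : ZMod k).val = k - 1 := by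
    rw [hneg, ZMod.val_natCast, Nat.mod_eq_of_lt (by omega)]
  have hne1 : ∀ m : ℕ, m < k - 1 → (m : ZMod k) ≠ -1 := fun m hm => by
    rw [hneg]; exact (cast_ne_cast hm (by omega)).symm
  have hv2 : ((k - 2 : ℕ) : ZMod k).val = k - 2 := by
    rw [ZMod.val_natCast, Nat.mod_eq_of_lt (by omega)]
  have Tup : ∀ j : ZMod k, Relation.ReflTransGen r (((0 : ℕ) : ZMod k), true) (j, true) := by
    intro j
    refine reach_fwd_to true 0 j (fun m h1 h2 => ?_)
    rw [cast_succ]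
    refine htf _ (hne1 m ?_)
    have hb := ZMod.val_lt (j - ((0 : ℕ) : ZMod k))
    omega
  have Tdn : ∀ j : ZMod k, Relation.ReflTransGen r (j, true) (((0 : ℕ) : ZMod k), true) := by
    intro j
    have seg : Relation.ReflTransGen r (j, true) ((-1 : ZMod k), true) := by
      have := reach_fwd_to (r := r) true j.val (-1 : ZMod k) (fun m h1 h2 => by
        rw [cast_succ]
        exact htf _ (cast_ne_of_val h1 (by omega)))
      rwa [val_cast] at this
    exact ((seg.tail hdnk).tail hff).tail hup0
  have Fto : ∀ j : ZMod k, Relation.ReflTransGen r (j, false) (((0 : ℕ) : ZMod k), true) := by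
    intro j
    have hjv := ZMod.val_lt j
    rcases le_or_gt j.val (k - 2) with hle | hgt
    · have seg : Relation.ReflTransGen r (j, false) (((0 : ℕ) : ZMod k), false) := by
        refine reach_bwd_from false 0 j (fun m h1 h2 => ?_)
        have hb : (j - ((0 : ℕ) : ZMod k)).val = j.val := by rw [Nat.cast_zero, sub_zero]
        rw [cast_succ]
        exact hfb _ (hne1 m (by omega))
          ((cast_ne_cast (show m < k - 2 by omega) (by omega)).symm)
      exact seg.tail hup0
    · have hj : j = -1 := by rw [← val_cast j, show j.val = k - 1 by omega, ← hneg]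
      rw [hj]
      exact (Relation.ReflTransGen.refl.tail hff).tail hup0
  have Ffrom : ∀ j : ZMod k, Relation.ReflTransGen r (((0 : ℕ) : ZMod k), true) (j, false) := by
    intro j
    have hjv := ZMod.val_lt j
    rcases le_or_gt j.val (k - 2) with hle | hgt
    · have seg : Relation.ReflTransGen r (((k - 2 : ℕ) : ZMod k), false) (j, false) := by
        have := reach_bwd_from (r := r) false j.val ((k - 2 : ℕ) : ZMod k) (fun m h1 h2 => by
          have hb : (((k - 2 : ℕ) : ZMod k) - ((j.val : ℕ) : ZMod k)).val = (k - 2) - j.val := by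
            rw [val_sub_cast (by rw [hv2]; omega), hv2]
          rw [cast_succ]
          exact hfb _ (hne1 m (by omega))
            ((cast_ne_cast (show m < k - 2 by omega) (by omega)).symm))
        rwa [val_cast] at this
      exact ((Tup _).tail hdn2).trans seg
    · have hj : j = -1 := by rw [← val_cast j, show j.val = k - 1 by omega, ← hneg]
      rw [hj]
      exact (Tup _).tail hdnk
  rintro ⟨j, bj⟩ ⟨j', bj'⟩
  have Hto : Relation.ReflTransGen r (j, bj) (((0 : ℕ) : ZMod k), true) := by
    cases bj
    · exact Fto j
    · exact Tdn j
  have Hfrom : Relation.ReflTransGen r (((0 : ℕ) : ZMod k), true) (j', bj') := by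
    cases bj'
    · exact Ffrom j'
    · exact Tup j'
  exact Hto.trans Hfrom

/-- O2 with top edge `t_{k-2}` deleted (k odd case). -/
lemma cfgBt (hk : 3 ≤ k)
    (hfb : ∀ j : ZMod k, j ≠ -1 → r (j + 1, false) (j, false))
    (hff : r (-1, false) (((0 : ℕ) : ZMod k), false))
    (htf : ∀ j : ZMod k, j ≠ -1 → j ≠ ((k - 2 : ℕ) : ZMod k) → r (j, true) (j + 1, true))
    (htflip : r (((0 : ℕ) : ZMod k), true) (-1, true))
    (hup0 : r (((0 : ℕ) : ZMod k), false) (((0 : ℕ) : ZMod k), true))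
    (hdn2 : r (((k - 2 : ℕ) : ZMod k), true) (((k - 2 : ℕ) : ZMod k), false))
    (hdnk : r (-1, true) (-1, false)) : IsStrong r := by
  haveI : NeZero k := ⟨by omega⟩
  have hneg : (-1 : ZMod k) = ((k - 1 : ℕ) : ZMod k) := neg_one_eq_cast (by omega)
  have hvneg : (-1 : ZMod k).val = k - 1 := by
    rw [hneg, ZMod.val_natCast, Nat.mod_eq_of_lt (by omega)]
  have hne1 : ∀ m : ℕ, m < k - 1 → (m : ZMod k) ≠ -1 := fun m hm => by
    rw [hneg]; exact (cast_ne_cast hm (by omega)).symm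
  have hv2 : ((k - 2 : ℕ) : ZMod k).val = k - 2 := by
    rw [ZMod.val_natCast, Nat.mod_eq_of_lt (by omega)]
  have Fdn : ∀ j : ZMod k, Relation.ReflTransGen r (j, false) (((0 : ℕ) : ZMod k), false) := by
    intro j
    refine reach_bwd_from false 0 j (fun m h1 h2 => ?_)
    have hb : (j - ((0 : ℕ) : ZMod k)).val = j.val := by rw [Nat.cast_zero, sub_zero]
    have hjv := ZMod.val_lt j
    rw [cast_succ]
    exact hfb _ (hne1 m (by omega))
  have Fup : ∀ j : ZMod k, Relation.ReflTransGen r (((0 : ℕ) : ZMod k), false) (j, false) := by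
    intro j
    have s0 : Relation.ReflTransGen r (((0 : ℕ) : ZMod k), false) ((-1 : ZMod k), false) :=
      ((Relation.ReflTransGen.refl.tail hup0).tail htflip).tail hdnk
    have seg : Relation.ReflTransGen r ((-1 : ZMod k), false) (j, false) := by
      have := reach_bwd_from (r := r) false j.val (-1 : ZMod k) (fun m h1 h2 => by
        have hb : ((-1 : ZMod k) - ((j.val : ℕ) : ZMod k)).val = (k - 1) - j.val := by
          rw [val_sub_cast (by rw [hvneg]; have := ZMod.val_lt j; omega), hvneg]
        rw [cast_succ]
        exact hfb _ (hne1 m (by omega)))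
      rwa [val_cast] at this
    exact s0.trans seg
  have Tto : ∀ j : ZMod k, Relation.ReflTransGen r (j, true) (((0 : ℕ) : ZMod k), false) := by
    intro j
    have hjv := ZMod.val_lt j
    rcases le_or_gt j.val (k - 2) with hle | hgt
    · have seg : Relation.ReflTransGen r (j, true) (((k - 2 : ℕ) : ZMod k), true) := by
        have := reach_fwd_to (r := r) true j.val ((k - 2 : ℕ) : ZMod k) (fun m h1 h2 => by
          have hb : (((k - 2 : ℕ) : ZMod k) - ((j.val : ℕ) : ZMod k)).val = (k - 2) - j.val := by
            rw [val_sub_cast (by rw [hv2]; omega), hv2]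
          rw [cast_succ]
          exact htf _ (hne1 m (by omega))
            ((cast_ne_cast (show m < k - 2 by omega) (by omega)).symm))
        rwa [val_cast] at this
      exact (seg.tail hdn2).trans (Fdn _)
    · have hj : j = -1 := by rw [← val_cast j, show j.val = k - 1 by omega, ← hneg]
      rw [hj]
      exact (Relation.ReflTransGen.refl.tail hdnk).trans (Fdn _)
  have Tfrom : ∀ j : ZMod k, Relation.ReflTransGen r (((0 : ℕ) : ZMod k), false) (j, true) := by
    intro j
    have hjv := ZMod.val_lt j
    rcases le_or_gt j.val (k - 2) with hle | hgt
    · have seg : Relation.ReflTransGen r (((0 : ℕ) : ZMod k), true) (j, true) := by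
        refine reach_fwd_to true 0 j (fun m h1 h2 => ?_)
        have hb : (j - ((0 : ℕ) : ZMod k)).val = j.val := by rw [Nat.cast_zero, sub_zero]
        rw [cast_succ]
        exact htf _ (hne1 m (by omega))
          ((cast_ne_cast (show m < k - 2 by omega) (by omega)).symm)
      exact (Relation.ReflTransGen.refl.tail hup0).trans seg
    · have hj : j = -1 := by rw [← val_cast j, show j.val = k - 1 by omega, ← hneg]
      rw [hj]
      exact (Relation.ReflTransGen.refl.tail hup0).tail htflip
  rintro ⟨j, bj⟩ ⟨j', bj'⟩
  have Hto : Relation.ReflTransGen r (j, bj) (((0 : ℕ) : ZMod k), false) := by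
    cases bj
    · exact Fdn j
    · exact Tto j
  have Hfrom : Relation.ReflTransGen r (((0 : ℕ) : ZMod k), false) (j', bj') := by
    cases bj'
    · exact Fup j'
    · exact Tfrom j'
  exact Hto.trans Hfrom

end Cfg3



section TheOrientations
variable {k : ℕ}

/-- First orientation: bottom cycle forward, top cycle backward, spokes up at even
indices, down at odd indices. -/
def O1dir (k : ℕ) : ZMod k × Bool → ZMod k × Bool → Prop :=
  Odir (fun _ => true) (fun _ => false) (fun i => decide (i.val % 2 = 0))

/-- Second orientation: bottom cycle backward except forward at `-1`, top cycle forward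
except backward at `-1`, spokes up at even indices except `-1`, down otherwise. -/
def O2dir (k : ℕ) : ZMod k × Bool → ZMod k × Bool → Prop :=
  Odir (fun i => decide (i = -1)) (fun i => !decide (i = -1))
    (fun i => decide (i.val % 2 = 0 ∧ i ≠ -1))

lemma o1_f (i : ZMod k) : O1dir k (i, false) (i + 1, false) :=
  Or.inl ⟨rfl, rfl, Or.inl ⟨rfl, rfl⟩⟩

lemma o1_t (i : ZMod k) : O1dir k (i + 1, true) (i, true) :=
  Or.inr (Or.inl ⟨rfl, rfl, Or.inr ⟨rfl, rfl⟩⟩)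

lemma o1_up {i : ZMod k} (h : i.val % 2 = 0) : O1dir k (i, false) (i, true) :=
  Or.inr (Or.inr ⟨rfl, Or.inl ⟨rfl, rfl, by simp [h]⟩⟩)

lemma o1_dn {i : ZMod k} (h : i.val % 2 ≠ 0) : O1dir k (i, true) (i, false) :=
  Or.inr (Or.inr ⟨rfl, Or.inr ⟨rfl, rfl, by simp [h]⟩⟩)

lemma o2_fb {i : ZMod k} (h : i ≠ -1) : O2dir k (i + 1, false) (i, false) :=
  Or.inl ⟨rfl, rfl, Or.inr ⟨rfl, by simp [h]⟩⟩

lemma o2_ff : O2dir k ((-1 : ZMod k), false) (((0 : ℕ) : ZMod k), false) :=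
  Or.inl ⟨rfl, rfl, Or.inl ⟨by push_cast; ring, by simp⟩⟩

lemma o2_tf {i : ZMod k} (h : i ≠ -1) : O2dir k (i, true) (i + 1, true) :=
  Or.inr (Or.inl ⟨rfl, rfl, Or.inl ⟨rfl, by simp [h]⟩⟩)

lemma o2_tflip : O2dir k (((0 : ℕ) : ZMod k), true) ((-1 : ZMod k), true) :=
  Or.inr (Or.inl ⟨rfl, rfl, Or.inr ⟨by push_cast; ring, by simp⟩⟩)

lemma o2_up {i : ZMod k} (h : i.val % 2 = 0) (h2 : i ≠ -1) : O2dir k (i, false) (i, true) :=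
  Or.inr (Or.inr ⟨rfl, Or.inl ⟨rfl, rfl, by simp [h, h2]⟩⟩)

lemma o2_dn {i : ZMod k} (h : ¬(i.val % 2 = 0 ∧ i ≠ -1)) : O2dir k (i, true) (i, false) :=
  Or.inr (Or.inr ⟨rfl, Or.inr ⟨rfl, rfl, by simpa using h⟩⟩)

lemma del_mk {V : Type*} {r : V → V → Prop} {u v a c : V} (h : r a c)
    (h1 : a = u → c = v → False) (h2 : a = v → c = u → False) : delEdge r u v a c :=
  ⟨h, by rintro (⟨e1, e2⟩ | ⟨e1, e2⟩); exacts [h1 e1 e2, h2 e1 e2]⟩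

lemma delEdge_comm {V : Type*} (r : V → V → Prop) (u v : V) :
    delEdge r u v = delEdge r v u := by
  funext a b
  exact propext ⟨fun ⟨h1, h2⟩ => ⟨h1, fun hc => h2 (Or.symm hc)⟩,
    fun ⟨h1, h2⟩ => ⟨h1, fun hc => h2 (Or.symm hc)⟩⟩

end TheOrientations


section Coverage
variable {k : ℕ}

lemma cover_spoke (hk : 3 ≤ k) (j : ZMod k) :
    IsStrong (delEdge (O1dir k) (j, false) (j, true)) ∨
    IsStrong (delEdge (O2dir k) (j, false) (j, true)) := by
  haveI : NeZero k := ⟨by omega⟩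
  have hneg : (-1 : ZMod k) = ((k - 1 : ℕ) : ZMod k) := neg_one_eq_cast (by omega)
  have h10 : (1 : ZMod k) ≠ 0 := one_ne_zero' hk
  have h20 : (2 : ZMod k) ≠ 0 := two_ne_zero' hk
  have hval0 : ((0 : ℕ) : ZMod k).val = 0 := by
    rw [ZMod.val_natCast, Nat.mod_eq_of_lt (by omega)]
  have hval1 : ((1 : ℕ) : ZMod k).val = 1 := by
    rw [ZMod.val_natCast, Nat.mod_eq_of_lt (by omega)]
  have hval2 : ((2 : ℕ) : ZMod k).val = 2 := by
    rw [ZMod.val_natCast, Nat.mod_eq_of_lt (by omega)]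
  have hc20 : ((2 : ℕ) : ZMod k) ≠ 0 := by
    have := cast_ne_cast (k := k) (a := 0) (m := 2) (by omega) (by omega)
    simpa using this
  have hc10 : ((1 : ℕ) : ZMod k) ≠ 0 := by
    have := cast_ne_cast (k := k) (a := 0) (m := 1) (by omega) (by omega)
    simpa using this
  have hc0n : ((0 : ℕ) : ZMod k) ≠ -1 := by
    rw [hneg]
    exact (cast_ne_cast (by omega) (by omega)).symm
  have hc1n : ((1 : ℕ) : ZMod k) ≠ -1 := by
    rw [hneg]
    exact (cast_ne_cast (by omega) (by omega)).symm
  by_cases hj0 : j = 0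
  · subst hj0
    left
    refine cfg0 hk ((2 : ℕ) : ZMod k) ((1 : ℕ) : ZMod k)
      (fun i' => del_mk (o1_f i') (fun _ e2 => by simp at e2) (fun e1 _ => by simp at e1))
      (fun i' => del_mk (o1_t i') (fun e1 _ => by simp at e1) (fun _ e2 => by simp at e2))
      (del_mk (o1_up (by omega))
        (fun e1 _ => hc20 (by simpa using e1)) (fun e1 _ => by simp at e1))
      (del_mk (o1_dn (by omega))
        (fun e1 _ => by simp at e1) (fun e1 _ => hc10 (by simpa using e1)))
  · by_cases hjn : j = -1
    · subst hjn
      left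
      refine cfg0 hk ((0 : ℕ) : ZMod k) ((1 : ℕ) : ZMod k)
        (fun i' => del_mk (o1_f i') (fun _ e2 => by simp at e2) (fun e1 _ => by simp at e1))
        (fun i' => del_mk (o1_t i') (fun e1 _ => by simp at e1) (fun _ e2 => by simp at e2))
        (del_mk (o1_up (by omega))
          (fun e1 _ => hc0n (by simpa using e1)) (fun e1 _ => by simp at e1))
        (del_mk (o1_dn (by omega))
          (fun e1 _ => by simp at e1) (fun e1 _ => hc1n (by simpa using e1)))
    · right
      have hk0 : ((k - 1 + 1 : ℕ) : ZMod k) = ((0 : ℕ) : ZMod k) := by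
        rw [Nat.sub_add_cancel (by omega), ZMod.natCast_self, Nat.cast_zero]
      refine cfg2 hk (k - 1) ?_ ?_ ?_ ?_
      · intro i' hne
        rw [← hneg] at hne
        exact del_mk (o2_fb hne) (fun _ e2 => by simp at e2) (fun e1 _ => by simp at e1)
      · intro i' hne
        rw [← hneg] at hne
        exact del_mk (o2_tf hne) (fun e1 _ => by simp at e1) (fun _ e2 => by simp at e2)
      · rw [← hneg]
        exact del_mk (o2_dn (by simp)) (fun e1 _ => by simp at e1)
          (fun e1 _ => hjn (by simpa using e1.symm))
      · rw [hk0]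
        refine del_mk (o2_up (by omega) hc0n) ?_ (fun e1 _ => by simp at e1)
        intro e1 _
        simp only [Prod.mk.injEq] at e1
        exact hj0 (by rw [← e1.1, Nat.cast_zero])

end Coverage


section CoverF
variable {k : ℕ}

lemma cover_cycle_f (hk : 3 ≤ k) (i : ZMod k) :
    IsStrong (delEdge (O1dir k) (i, false) (i + 1, false)) ∨
    IsStrong (delEdge (O2dir k) (i, false) (i + 1, false)) := by
  haveI : NeZero k := ⟨by omega⟩
  have hneg : (-1 : ZMod k) = ((k - 1 : ℕ) : ZMod k) := neg_one_eq_cast (by omega)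
  have hneg2 : (-2 : ZMod k) = ((k - 2 : ℕ) : ZMod k) := by
    have hadd : ((k - 2 : ℕ) : ZMod k) + ((2 : ℕ) : ZMod k) = ((k - 2 + 2 : ℕ) : ZMod k) := by
      push_cast; ring
    rw [Nat.sub_add_cancel (by omega), ZMod.natCast_self] at hadd
    have h22 : ((2 : ℕ) : ZMod k) = 2 := by push_cast; ring
    rw [h22] at hadd
    linear_combination -hadd
  have h20 : (2 : ZMod k) ≠ 0 := two_ne_zero' hk
  have hc0n : ((0 : ℕ) : ZMod k) ≠ -1 := by
    rw [hneg]
    exact (cast_ne_cast (by omega) (by omega)).symm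
  have hval0 : ((0 : ℕ) : ZMod k).val = 0 := by
    rw [ZMod.val_natCast, Nat.mod_eq_of_lt (by omega)]
  have hk0 : ((k - 1 + 1 : ℕ) : ZMod k) = ((0 : ℕ) : ZMod k) := by
    rw [Nat.sub_add_cancel (by omega), ZMod.natCast_self, Nat.cast_zero]
  by_cases hin : i = -1
  · right
    subst hin
    rw [show ((-1 : ZMod k) + 1) = 0 from by ring]
    refine cfg2 hk (k - 1) ?_ ?_ ?_ ?_
    · intro i' hne
      rw [← hneg] at hne
      refine del_mk (o2_fb hne) ?_ ?_
      · intro e1 e2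
        simp only [Prod.mk.injEq] at e1 e2
        exact h20 (by linear_combination e1.1 - e2.1)
      · exact fun _ e2 => hne (by simpa using e2)
    · intro i' hne
      rw [← hneg] at hne
      exact del_mk (o2_tf hne) (fun e1 _ => by simp at e1) (fun e1 _ => by simp at e1)
    · rw [← hneg]
      exact del_mk (o2_dn (by simp)) (fun e1 _ => by simp at e1) (fun e1 _ => by simp at e1)
    · rw [hk0]
      refine del_mk (o2_up (by omega) hc0n) ?_ ?_
      · exact fun e1 _ => hc0n (by simpa using e1)
      · exact fun _ e2 => by simp at e2
  · by_cases hpar : i.val % 2 = 0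
    · left
      have hvine : i.val ≠ k - 1 := fun h => hin (by rw [← val_cast i, h, ← hneg])
      have hvi : i.val + 1 < k := by have := ZMod.val_lt i; omega
      refine cfg1 hk i.val ?_ ?_ ?_ ?_
      · intro i' hne
        rw [val_cast] at hne
        refine del_mk (o1_f i') (fun e1 _ => hne (by simpa using e1)) ?_
        intro e1 e2
        simp only [Prod.mk.injEq] at e1 e2
        exact no_two_cycle hk e2.1.symm e1.1
      · intro i' _
        exact del_mk (o1_t i') (fun e1 _ => by simp at e1) (fun e1 _ => by simp at e1)
      · rw [val_cast]
        exact del_mk (o1_up hpar) (fun _ e2 => by simp at e2) (fun _ e2 => by simp at e2)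
      · have hv1 : ((i.val + 1 : ℕ) : ZMod k).val = i.val + 1 := by
          rw [ZMod.val_natCast, Nat.mod_eq_of_lt hvi]
        exact del_mk (o1_dn (by omega)) (fun e1 _ => by simp at e1) (fun e1 _ => by simp at e1)
    · have hvine : i.val ≠ k - 1 := fun h => hin (by rw [← val_cast i, h, ← hneg])
      have hv2' : (-2 : ZMod k).val = k - 2 := by
        rw [hneg2, ZMod.val_natCast, Nat.mod_eq_of_lt (by omega)]
      by_cases hi2 : i.val = k - 2
      · right
        have hieq : i = ((k - 2 : ℕ) : ZMod k) := by rw [← val_cast i, hi2]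
        have hip1 : i + 1 = -1 := by
          rw [hieq, hneg, ← Nat.cast_one, ← Nat.cast_add]
          congr 1
          omega
        have hv2 : ((k - 2 : ℕ) : ZMod k).val = k - 2 := by
          rw [ZMod.val_natCast, Nat.mod_eq_of_lt (by omega)]
        refine cfgBe hk ?_ ?_ ?_ ?_ ?_ ?_
        · intro jj hne hne2
          refine del_mk (o2_fb hne) ?_ ?_
          · intro e1 e2
            simp only [Prod.mk.injEq] at e1 e2
            exact no_two_cycle hk e1.1.symm e2.1
          · exact fun _ e2 => hne2 (by rw [← hieq]; simpa using e2)
        · refine del_mk o2_ff (fun e1 _ => hin (by simpa using e1.symm)) ?_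
          intro _ e2
          simp only [Prod.mk.injEq, Nat.cast_zero] at e2
          have h02 : (0 : ZMod k) = -2 := by rw [e2.1, hieq, ← hneg2]
          exact h20 (by linear_combination h02)
        · intro jj hne
          exact del_mk (o2_tf hne) (fun e1 _ => by simp at e1) (fun e1 _ => by simp at e1)
        · refine del_mk (o2_up (i := ((0 : ℕ) : ZMod k)) (by omega) hc0n) ?_ ?_
          · intro e1 _
            simp only [Prod.mk.injEq] at e1
            exact (cast_ne_cast (show 0 < k - 2 by omega) (by omega)).symm (e1.1.trans hieq)
          · intro e1 _
            simp only [Prod.mk.injEq] at e1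
            rw [hip1] at e1
            exact hc0n e1.1
        · have hD : ¬(((k - 2 : ℕ) : ZMod k).val % 2 = 0 ∧ ((k - 2 : ℕ) : ZMod k) ≠ -1) := by
            rw [hv2]
            intro hc
            exact hpar (by omega)
          exact del_mk (o2_dn hD) (fun e1 _ => by simp at e1) (fun e1 _ => by simp at e1)
        · exact del_mk (o2_dn (by simp)) (fun e1 _ => by simp at e1) (fun e1 _ => by simp at e1)
      · right
        have hii : i.val + 2 < k := by have := ZMod.val_lt i; omega
        have hip1 : ((i.val + 1 : ℕ) : ZMod k) = i + 1 := by rw [cast_succ, val_cast]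
        have hin2 : i ≠ -2 := fun h => hi2 (by rw [h, hv2'])
        have hi0 : i ≠ 0 := fun h => hpar (by rw [h, ZMod.val_zero])
        have hvv : ((i.val : ℕ) : ZMod k).val = i.val := by
          rw [ZMod.val_natCast, Nat.mod_eq_of_lt (ZMod.val_lt i)]
        have hv1 : ((i.val + 1 : ℕ) : ZMod k).val = i.val + 1 := by
          rw [ZMod.val_natCast, Nat.mod_eq_of_lt (by omega)]
        refine cfgAe hk i.val hii ?_ ?_ ?_ ?_ ?_ ?_ ?_
        · intro jj hne hne2
          rw [val_cast] at hne2
          refine del_mk (o2_fb hne) ?_ (fun _ e2 => hne2 (by simpa using e2))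
          intro e1 e2
          simp only [Prod.mk.injEq] at e1 e2
          exact no_two_cycle hk e1.1.symm e2.1
        · refine del_mk o2_ff (fun e1 _ => hin (by simpa using e1.symm)) ?_
          intro e1 _
          simp only [Prod.mk.injEq] at e1
          exact hin2 (by linear_combination -e1.1)
        · intro jj hne
          exact del_mk (o2_tf hne) (fun e1 _ => by simp at e1) (fun e1 _ => by simp at e1)
        · refine del_mk (o2_up (by omega) hc0n) ?_ ?_
          · intro e1 _
            simp only [Prod.mk.injEq, Nat.cast_zero] at e1
            exact hi0 e1.1.symm
          · intro e1 _
            simp only [Prod.mk.injEq, Nat.cast_zero] at e1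
            exact hin (by linear_combination -e1.1)
        · refine del_mk (o2_up (by omega) (by rw [hneg]; exact (cast_ne_cast (show i.val + 1 < k - 1 by omega) (by omega)).symm)) ?_ ?_
          · intro e1 _
            simp only [Prod.mk.injEq] at e1
            rw [hip1] at e1
            exact add_one_ne hk i e1.1
          · exact fun _ e2 => by simp at e2
        · exact del_mk (o2_dn (by intro hc; exact hpar (by omega)))
            (fun e1 _ => by simp at e1) (fun e1 _ => by simp at e1)
        · exact del_mk (o2_dn (by simp)) (fun e1 _ => by simp at e1) (fun e1 _ => by simp at e1)

end CoverF


section CoverT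
variable {k : ℕ}

lemma cover_cycle_t (hk : 3 ≤ k) (i : ZMod k) :
    IsStrong (delEdge (O1dir k) (i, true) (i + 1, true)) ∨
    IsStrong (delEdge (O2dir k) (i, true) (i + 1, true)) := by
  haveI : NeZero k := ⟨by omega⟩
  have hneg : (-1 : ZMod k) = ((k - 1 : ℕ) : ZMod k) := neg_one_eq_cast (by omega)
  have hneg2 : (-2 : ZMod k) = ((k - 2 : ℕ) : ZMod k) := by
    have hadd : ((k - 2 : ℕ) : ZMod k) + ((2 : ℕ) : ZMod k) = ((k - 2 + 2 : ℕ) : ZMod k) := by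
      push_cast; ring
    rw [Nat.sub_add_cancel (by omega), ZMod.natCast_self] at hadd
    have h22 : ((2 : ℕ) : ZMod k) = 2 := by push_cast; ring
    rw [h22] at hadd
    linear_combination -hadd
  have h20 : (2 : ZMod k) ≠ 0 := two_ne_zero' hk
  have h10 : (1 : ZMod k) ≠ 0 := one_ne_zero' hk
  have hc0n : ((0 : ℕ) : ZMod k) ≠ -1 := by
    rw [hneg]
    exact (cast_ne_cast (by omega) (by omega)).symm
  have hval0 : ((0 : ℕ) : ZMod k).val = 0 := by
    rw [ZMod.val_natCast, Nat.mod_eq_of_lt (by omega)]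
  have hk0 : ((k - 1 + 1 : ℕ) : ZMod k) = ((0 : ℕ) : ZMod k) := by
    rw [Nat.sub_add_cancel (by omega), ZMod.natCast_self, Nat.cast_zero]
  by_cases hin : i = -1
  · right
    subst hin
    rw [show ((-1 : ZMod k) + 1) = 0 from by ring]
    refine cfg2 hk (k - 1) ?_ ?_ ?_ ?_
    · intro i' hne
      rw [← hneg] at hne
      exact del_mk (o2_fb hne) (fun e1 _ => by simp at e1) (fun e1 _ => by simp at e1)
    · intro i' hne
      rw [← hneg] at hne
      refine del_mk (o2_tf hne) (fun e1 _ => hne (by simpa using e1)) ?_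
      intro e1 e2
      simp only [Prod.mk.injEq] at e1 e2
      exact h20 (by linear_combination e2.1 - e1.1)
    · rw [← hneg]
      refine del_mk (o2_dn (by simp)) (fun _ e2 => by simp at e2) ?_
      intro e1 _
      simp only [Prod.mk.injEq] at e1
      exact h10 (by linear_combination -e1.1)
    · rw [hk0]
      exact del_mk (o2_up (i := ((0 : ℕ) : ZMod k)) (by omega) hc0n)
        (fun e1 _ => by simp at e1) (fun e1 _ => by simp at e1)
  · by_cases hpar : i.val % 2 = 0
    · left
      have hvine : i.val ≠ k - 1 := fun h => hin (by rw [← val_cast i, h, ← hneg])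
      have hvi : i.val + 1 < k := by have := ZMod.val_lt i; omega
      have hip1 : ((i.val + 1 : ℕ) : ZMod k) = i + 1 := by rw [cast_succ, val_cast]
      refine cfg1 hk i.val ?_ ?_ ?_ ?_
      · intro i' _
        exact del_mk (o1_f i') (fun e1 _ => by simp at e1) (fun e1 _ => by simp at e1)
      · intro i' hne
        rw [val_cast] at hne
        refine del_mk (o1_t i') ?_ (fun _ e2 => hne (by simpa using e2))
        intro e1 e2
        simp only [Prod.mk.injEq] at e1 e2
        exact no_two_cycle hk e1.1.symm e2.1
      · rw [val_cast]
        exact del_mk (o1_up hpar) (fun e1 _ => by simp at e1) (fun e1 _ => by simp at e1)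
      · have hv1 : ((i.val + 1 : ℕ) : ZMod k).val = i.val + 1 := by
          rw [ZMod.val_natCast, Nat.mod_eq_of_lt hvi]
        refine del_mk (o1_dn (by omega)) ?_ (fun _ e2 => by simp at e2)
        intro e1 _
        simp only [Prod.mk.injEq] at e1
        rw [hip1] at e1
        exact add_one_ne hk i e1.1
    · have hvine : i.val ≠ k - 1 := fun h => hin (by rw [← val_cast i, h, ← hneg])
      have hv2' : (-2 : ZMod k).val = k - 2 := by
        rw [hneg2, ZMod.val_natCast, Nat.mod_eq_of_lt (by omega)]
      by_cases hi2 : i.val = k - 2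
      · right
        have hieq : i = ((k - 2 : ℕ) : ZMod k) := by rw [← val_cast i, hi2]
        have hip1 : i + 1 = -1 := by
          rw [hieq, hneg, ← Nat.cast_one, ← Nat.cast_add]
          congr 1
          omega
        have hv2 : ((k - 2 : ℕ) : ZMod k).val = k - 2 := by
          rw [ZMod.val_natCast, Nat.mod_eq_of_lt (by omega)]
        refine cfgBt hk ?_ ?_ ?_ ?_ ?_ ?_ ?_
        · intro jj hne
          exact del_mk (o2_fb hne) (fun e1 _ => by simp at e1) (fun e1 _ => by simp at e1)
        · exact del_mk o2_ff (fun e1 _ => by simp at e1) (fun e1 _ => by simp at e1)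
        · intro jj hne hne2
          refine del_mk (o2_tf hne)
            (fun e1 _ => hne2 ((show jj = i by simpa using e1).trans hieq)) ?_
          intro e1 _
          exact hne ((show jj = i + 1 by simpa using e1).trans hip1)
        · refine del_mk o2_tflip ?_ ?_
          · intro e1 _
            simp only [Prod.mk.injEq] at e1
            exact (cast_ne_cast (show 0 < k - 2 by omega) (by omega)).symm (e1.1.trans hieq)
          · intro e1 _
            simp only [Prod.mk.injEq] at e1
            exact hc0n (e1.1.trans hip1)
        · exact del_mk (o2_up (i := ((0 : ℕ) : ZMod k)) (by omega) hc0n)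
            (fun e1 _ => by simp at e1) (fun e1 _ => by simp at e1)
        · have hD : ¬(((k - 2 : ℕ) : ZMod k).val % 2 = 0 ∧ ((k - 2 : ℕ) : ZMod k) ≠ -1) := by
            rw [hv2]
            intro hc
            exact hpar (by omega)
          refine del_mk (o2_dn hD) (fun _ e2 => by simp at e2) ?_
          intro e1 _
          simp only [Prod.mk.injEq] at e1
          have h21 := e1.1.trans hip1
          rw [hneg] at h21
          exact (cast_ne_cast (show k - 2 < k - 1 by omega) (by omega)).symm h21
        · refine del_mk (o2_dn (by simp)) (fun e1 _ => hin (by simpa using e1.symm)) ?_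
          exact fun _ e2 => by simp at e2
      · right
        have hii : i.val + 2 < k := by have := ZMod.val_lt i; omega
        have hip1 : ((i.val + 1 : ℕ) : ZMod k) = i + 1 := by rw [cast_succ, val_cast]
        have hin2 : i ≠ -2 := fun h => hi2 (by rw [h, hv2'])
        have hi0 : i ≠ 0 := fun h => hpar (by rw [h, ZMod.val_zero])
        have hvv : ((i.val : ℕ) : ZMod k).val = i.val := by
          rw [ZMod.val_natCast, Nat.mod_eq_of_lt (ZMod.val_lt i)]
        have hv1 : ((i.val + 1 : ℕ) : ZMod k).val = i.val + 1 := by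
          rw [ZMod.val_natCast, Nat.mod_eq_of_lt (by omega)]
        refine cfgAt hk i.val hii ?_ ?_ ?_ ?_ ?_ ?_ ?_ ?_
        · intro jj hne
          exact del_mk (o2_fb hne) (fun e1 _ => by simp at e1) (fun e1 _ => by simp at e1)
        · exact del_mk o2_ff (fun e1 _ => by simp at e1) (fun e1 _ => by simp at e1)
        · intro jj hne hne2
          rw [val_cast] at hne2
          refine del_mk (o2_tf hne) (fun e1 _ => hne2 (by simpa using e1)) ?_
          intro e1 e2
          simp only [Prod.mk.injEq] at e1 e2
          exact no_two_cycle hk e2.1.symm e1.1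
        · refine del_mk o2_tflip ?_ (fun _ e2 => hin (by simpa using e2.symm))
          intro e1 _
          simp only [Prod.mk.injEq, Nat.cast_zero] at e1
          exact hi0 e1.1.symm
        · exact del_mk (o2_up (i := ((0 : ℕ) : ZMod k)) (by omega) hc0n)
            (fun e1 _ => by simp at e1) (fun e1 _ => by simp at e1)
        · refine del_mk (o2_up (by omega) (by rw [hneg]; exact (cast_ne_cast (show i.val + 1 < k - 1 by omega) (by omega)).symm)) ?_ ?_
          · exact fun e1 _ => by simp at e1
          · exact fun e1 _ => by simp at e1
        · refine del_mk (o2_dn (by intro hc; exact hpar (by omega))) (fun _ e2 => by simp at e2) ?_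
          intro e1 _
          simp only [Prod.mk.injEq] at e1
          rw [val_cast] at e1
          exact add_one_ne hk i e1.1.symm
        · refine del_mk (o2_dn (by simp)) (fun e1 _ => hin (by simpa using e1.symm)) ?_
          intro e1 _
          simp only [Prod.mk.injEq] at e1
          exact hin2 (by linear_combination -e1.1)

end CoverT


section Strong
variable {k : ℕ}

lemma O1_strong (hk : 3 ≤ k) : IsStrong (O1dir k) := by
  haveI : NeZero k := ⟨by omega⟩
  have hval0 : ((0 : ℕ) : ZMod k).val = 0 := by
    rw [ZMod.val_natCast, Nat.mod_eq_of_lt (by omega)]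
  have hval1 : ((0 + 1 : ℕ) : ZMod k).val = 1 := by
    rw [ZMod.val_natCast, Nat.mod_eq_of_lt (by omega)]
  exact cfg1 hk 0 (fun i' _ => o1_f i') (fun i' _ => o1_t i')
    (o1_up (by omega)) (o1_dn (by omega))

lemma O2_strong (hk : 3 ≤ k) : IsStrong (O2dir k) := by
  haveI : NeZero k := ⟨by omega⟩
  have hneg : (-1 : ZMod k) = ((k - 1 : ℕ) : ZMod k) := neg_one_eq_cast (by omega)
  have hc0n : ((0 : ℕ) : ZMod k) ≠ -1 := by
    rw [hneg]
    exact (cast_ne_cast (by omega) (by omega)).symm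
  have hval0 : ((0 : ℕ) : ZMod k).val = 0 := by
    rw [ZMod.val_natCast, Nat.mod_eq_of_lt (by omega)]
  have hk0 : ((k - 1 + 1 : ℕ) : ZMod k) = ((0 : ℕ) : ZMod k) := by
    rw [Nat.sub_add_cancel (by omega), ZMod.natCast_self, Nat.cast_zero]
  refine cfg2 hk (k - 1) ?_ ?_ ?_ ?_
  · intro i' hne
    rw [← hneg] at hne
    exact o2_fb hne
  · intro i' hne
    rw [← hneg] at hne
    exact o2_tf hne
  · rw [← hneg]
    exact o2_dn (by simp)
  · rw [hk0]
    exact o2_up (by omega) hc0n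

lemma lower_bound (hk : 3 ≤ k) (O : Orient (prism k)) (hS : IsStrong O.dir)
    (hdel : ∀ u v, (prism k).Adj u v → EdgeDeletable O u v) : False := by
  haveI : NeZero k := ⟨by omega⟩
  have h10 : (1 : ZMod k) ≠ 0 := one_ne_zero' hk
  have h20 : (2 : ZMod k) ≠ 0 := two_ne_zero' hk
  have hchar : ∀ y, (prism k).Adj ((0 : ZMod k), false) y →
      y = ((1 : ZMod k), false) ∨ y = ((-1 : ZMod k), false) ∨ y = ((0 : ZMod k), true) := by
    rintro ⟨y1, yb⟩ h
    rw [prism, SimpleGraph.fromRel_adj] at h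
    obtain ⟨-, h⟩ := h
    dsimp only at h
    simp only [Prod.mk.injEq]
    rcases h with (⟨hb, hv⟩ | ⟨hv, hb⟩) | (⟨hb, hv⟩ | ⟨hv, hb⟩)
    · exact Or.inl ⟨by rw [hv, zero_add], hb.symm⟩
    · exact Or.inr (Or.inr ⟨hv.symm, by revert hb; cases yb <;> simp⟩)
    · exact Or.inr (Or.inl ⟨by linear_combination -hv, hb⟩)
    · exact Or.inr (Or.inr ⟨hv, by revert hb; cases yb <;> simp⟩)
  have adj1 : (prism k).Adj ((0 : ZMod k), false) ((1 : ZMod k), false) := by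
    rw [prism, SimpleGraph.fromRel_adj]
    refine ⟨?_, Or.inl (Or.inl ⟨rfl, (zero_add 1).symm⟩)⟩
    intro h
    simp only [Prod.mk.injEq] at h
    exact h10 h.1.symm
  have adj2 : (prism k).Adj ((0 : ZMod k), false) ((-1 : ZMod k), false) := by
    rw [prism, SimpleGraph.fromRel_adj]
    refine ⟨?_, Or.inr (Or.inl ⟨rfl, by ring⟩)⟩
    intro h
    simp only [Prod.mk.injEq] at h
    exact h10 (by linear_combination h.1)
  have adj3 : (prism k).Adj ((0 : ZMod k), false) ((0 : ZMod k), true) := by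
    rw [prism, SimpleGraph.fromRel_adj]
    exact ⟨by simp, Or.inl (Or.inr ⟨rfl, by simp⟩)⟩
  have hxn3 : ((0 : ZMod k), false) ≠ ((0 : ZMod k), true) := by simp
  have hout : ∀ c, O.dir ((0 : ZMod k), false) c →
      c = ((1 : ZMod k), false) ∨ c = ((-1 : ZMod k), false) ∨ c = ((0 : ZMod k), true) :=
    fun c hc => hchar c ((O.dir_iff _ c).mp (Or.inl hc))
  have hin : ∀ c, O.dir c ((0 : ZMod k), false) →
      c = ((1 : ZMod k), false) ∨ c = ((-1 : ZMod k), false) ∨ c = ((0 : ZMod k), true) :=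
    fun c hc => hchar c ((O.dir_iff c _).mp (Or.inl hc)).symm
  have no_out : ∀ nj, (∀ c, O.dir ((0 : ZMod k), false) c → c = nj) →
      EdgeDeletable O ((0 : ZMod k), false) nj → False := by
    intro nj huniq hd
    rcases (hd ((0 : ZMod k), false) ((0 : ZMod k), true)).cases_head with heq | ⟨c, hc, -⟩
    · exact hxn3 heq
    · exact hc.2 (Or.inl ⟨rfl, huniq c hc.1⟩)
  have no_in : ∀ nj, (∀ c, O.dir c ((0 : ZMod k), false) → c = nj) →
      EdgeDeletable O ((0 : ZMod k), false) nj → False := by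
    intro nj huniq hd
    rcases (hd ((0 : ZMod k), true) ((0 : ZMod k), false)).cases_tail with heq | ⟨c, -, hc⟩
    · exact hxn3 heq
    · exact hc.2 (Or.inr ⟨huniq c hc.1, rfl⟩)
  have ha1 := (O.dir_iff _ _).mpr adj1
  have ha2 := (O.dir_iff _ _).mpr adj2
  have ha3 := (O.dir_iff _ _).mpr adj3
  by_cases h1 : O.dir ((0 : ZMod k), false) ((1 : ZMod k), false) <;>
    by_cases h2 : O.dir ((0 : ZMod k), false) ((-1 : ZMod k), false) <;>
    by_cases h3 : O.dir ((0 : ZMod k), false) ((0 : ZMod k), true)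
  · -- all out: no in-arc at all
    rcases (hS ((0 : ZMod k), true) ((0 : ZMod k), false)).cases_tail with heq | ⟨c, -, hc⟩
    · exact hxn3 heq
    · rcases hin c hc with rfl | rfl | rfl
      · exact O.not_both _ _ h1 hc
      · exact O.not_both _ _ h2 hc
      · exact O.not_both _ _ h3 hc
  · -- out to n1, n2; unique in from n3
    refine no_in ((0 : ZMod k), true) ?_ (hdel _ _ adj3)
    intro c hc
    rcases hin c hc with rfl | rfl | rfl
    · exact absurd hc (O.not_both _ _ h1)
    · exact absurd hc (O.not_both _ _ h2)
    · rfl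
  · -- out to n1, n3; unique in from n2
    refine no_in ((-1 : ZMod k), false) ?_ (hdel _ _ adj2)
    intro c hc
    rcases hin c hc with rfl | rfl | rfl
    · exact absurd hc (O.not_both _ _ h1)
    · rfl
    · exact absurd hc (O.not_both _ _ h3)
  · -- unique out to n1
    refine no_out ((1 : ZMod k), false) ?_ (hdel _ _ adj1)
    intro c hc
    rcases hout c hc with rfl | rfl | rfl
    · rfl
    · exact absurd hc h2
    · exact absurd hc h3
  · -- out to n2, n3; unique in from n1
    refine no_in ((1 : ZMod k), false) ?_ (hdel _ _ adj1)
    intro c hc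
    rcases hin c hc with rfl | rfl | rfl
    · rfl
    · exact absurd hc (O.not_both _ _ h2)
    · exact absurd hc (O.not_both _ _ h3)
  · -- unique out to n2
    refine no_out ((-1 : ZMod k), false) ?_ (hdel _ _ adj2)
    intro c hc
    rcases hout c hc with rfl | rfl | rfl
    · exact absurd hc h1
    · rfl
    · exact absurd hc h3
  · -- unique out to n3
    refine no_out ((0 : ZMod k), true) ?_ (hdel _ _ adj3)
    intro c hc
    rcases hout c hc with rfl | rfl | rfl
    · exact absurd hc h1
    · exact absurd hc h2
    · rfl
  · -- no out at all
    rcases (hS ((0 : ZMod k), false) ((0 : ZMod k), true)).cases_head with heq | ⟨c, hc, -⟩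
    · exact hxn3 heq
    · rcases hout c hc with rfl | rfl | rfl
      · exact h1 hc
      · exact h2 hc
      · exact h3 hc

end Strong

theorem stmt_8 (k : ℕ) (hk : 3 ≤ k) : frankNumber (prism k) = 2 := by
  haveI : NeZero k := ⟨by omega⟩
  have h2mem : 2 ∈ {n | ∃ Os : Fin n → Orient (prism k), (∀ i, IsStrong (Os i).dir) ∧
      ∀ u v, (prism k).Adj u v → ∃ i, EdgeDeletable (Os i) u v} := by
    refine ⟨![⟨O1dir k, Odir_iff hk _ _ _, Odir_asymm hk _ _ _⟩,
              ⟨O2dir k, Odir_iff hk _ _ _, Odir_asymm hk _ _ _⟩], ?_, ?_⟩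
    · intro i
      fin_cases i
      · exact O1_strong hk
      · exact O2_strong hk
    · rintro ⟨x, bx⟩ ⟨y, by'⟩ h
      rw [prism, SimpleGraph.fromRel_adj] at h
      obtain ⟨-, h⟩ := h
      dsimp only at h
      rcases h with (⟨hb, hv⟩ | ⟨hv, hb⟩) | (⟨hb, hv⟩ | ⟨hv, hb⟩)
      · subst hv
        subst hb
        cases bx with
        | false =>
          rcases cover_cycle_f hk x with hC | hC
          · exact ⟨0, hC⟩
          · exact ⟨1, hC⟩
        | true =>
          rcases cover_cycle_t hk x with hC | hC
          · exact ⟨0, hC⟩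
          · exact ⟨1, hC⟩
      · subst hv
        cases bx <;> cases by' <;> try simp at hb
        · rcases cover_spoke hk x with hC | hC
          · exact ⟨0, hC⟩
          · exact ⟨1, hC⟩
        · rcases cover_spoke hk x with hC | hC
          · refine ⟨0, ?_⟩
            show IsStrong (delEdge (O1dir k) _ _)
            rw [delEdge_comm]
            exact hC
          · refine ⟨1, ?_⟩
            show IsStrong (delEdge (O2dir k) _ _)
            rw [delEdge_comm]
            exact hC
      · subst hv
        subst hb
        cases by' with
        | false =>
          rcases cover_cycle_f hk y with hC | hC
          · refine ⟨0, ?_⟩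
            show IsStrong (delEdge (O1dir k) _ _)
            rw [delEdge_comm]
            exact hC
          · refine ⟨1, ?_⟩
            show IsStrong (delEdge (O2dir k) _ _)
            rw [delEdge_comm]
            exact hC
        | true =>
          rcases cover_cycle_t hk y with hC | hC
          · refine ⟨0, ?_⟩
            show IsStrong (delEdge (O1dir k) _ _)
            rw [delEdge_comm]
            exact hC
          · refine ⟨1, ?_⟩
            show IsStrong (delEdge (O2dir k) _ _)
            rw [delEdge_comm]
            exact hC
      · subst hv
        cases bx <;> cases by' <;> try simp at hb
        · rcases cover_spoke hk y with hC | hC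
          · exact ⟨0, hC⟩
          · exact ⟨1, hC⟩
        · rcases cover_spoke hk y with hC | hC
          · refine ⟨0, ?_⟩
            show IsStrong (delEdge (O1dir k) _ _)
            rw [delEdge_comm]
            exact hC
          · refine ⟨1, ?_⟩
            show IsStrong (delEdge (O2dir k) _ _)
            rw [delEdge_comm]
            exact hC
  have adj3 : (prism k).Adj ((0 : ZMod k), false) ((0 : ZMod k), true) := by
    rw [prism, SimpleGraph.fromRel_adj]
    exact ⟨by simp, Or.inl (Or.inr ⟨rfl, by simp⟩)⟩
  have hlb : ∀ m ∈ {n | ∃ Os : Fin n → Orient (prism k), (∀ i, IsStrong (Os i).dir) ∧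
      ∀ u v, (prism k).Adj u v → ∃ i, EdgeDeletable (Os i) u v}, 2 ≤ m := by
    intro m hm
    by_contra hlt
    push_neg at hlt
    obtain ⟨Os, hstrong, hcov⟩ := hm
    interval_cases m
    · obtain ⟨i, -⟩ := hcov _ _ adj3
      exact i.elim0
    · refine lower_bound hk (Os 0) (hstrong 0) (fun u v h => ?_)
      obtain ⟨i, hi⟩ := hcov u v h
      have hi0 : i = 0 := Subsingleton.elim _ _
      rwa [hi0] at hi
  exact le_antisymm (Nat.sInf_le h2mem) (le_csInf ⟨2, h2mem⟩ hlb)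

end Frank
end
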